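/- arXiv:1805.08266 — 9 statements merged into one kernel-verified Lean document; each statement's English description precedes it below -/
import Mathlib

section
/- Let φ: ℝ → ℝ be twice differentiable with φ, φ', φ'' of at most polynomial growth, and set M_φ := sup_{x ≥ 0} E[|φ'(xZ)² + φ''(xZ)φ(xZ)|]. If M_φ < ∞ and σ_w² M_φ < 1, then the variance function F(x) = σ_b² + σ_w² E[φ(√x Z)²] has a unique fixed point q ≥ 0, and for every initial value q¹ ≥ 0 the sequence defined by q^{l+1} = F(q^l) converges to q. -/
open MeasureTheory ProbabilityTheory Real Filter Topology Set
open scoped ENNReal NNReal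

noncomputable def stdG : Measure ℝ := gaussianReal 0 1

namespace SGaux

noncomputable def p (z : ℝ) : ℝ := gaussianPDFReal 0 1 z

lemma p_def : p = fun z : ℝ => (Real.sqrt (2 * π))⁻¹ * Real.exp (-z ^ 2 / 2) := by
  funext z
  simp [p, gaussianPDFReal]

lemma p_nonneg (z : ℝ) : 0 ≤ p z := gaussianPDFReal_nonneg 0 1 z

lemma p_cont : Continuous p := by
  rw [p_def]; fun_prop

lemma p_deriv (z : ℝ) : HasDerivAt p (-z * p z) z := by
  have h : HasDerivAt (fun z : ℝ => -z ^ 2 / 2) (-z) z := by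
    have := ((hasDerivAt_pow 2 z).neg.div_const 2)
    exact this.congr_deriv (by push_cast; ring)
  have h2 := (h.exp).const_mul ((Real.sqrt (2 * π))⁻¹)
  rw [p_def]
  exact h2.congr_deriv (by beta_reduce; ring)

lemma conv (f : ℝ → ℝ) : ∫ z, f z ∂stdG = ∫ z, f z * p z := by
  rw [stdG, gaussianReal_of_var_ne_zero 0 one_ne_zero]
  have hpdf : gaussianPDF 0 1 = fun x => ((p x).toNNReal : ℝ≥0∞) := rfl
  have p_meas : Measurable p := measurable_gaussianPDFReal 0 1
  rw [hpdf, integral_withDensity_eq_integral_smul (p_meas.real_toNNReal) f]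
  refine integral_congr_ae (Filter.Eventually.of_forall fun z => ?_)
  simp only [NNReal.smul_def, smul_eq_mul, Real.coe_toNNReal _ (p_nonneg z)]
  exact mul_comm _ _

lemma int_poly (m : ℕ) : Integrable (fun z : ℝ => (1 + |z|) ^ m * p z) := by
  have h4 : (0:ℝ) < 4⁻¹ := by norm_num
  refine ((integrable_exp_neg_mul_sq h4).const_mul
      ((Real.sqrt (2 * π))⁻¹ * Real.exp ((m : ℝ) ^ 2))).mono'
    (((continuous_const.add continuous_abs).pow m).mul p_cont).aestronglyMeasurable (Filter.Eventually.of_forall fun z => ?_)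
  have hc : (0:ℝ) ≤ (Real.sqrt (2 * π))⁻¹ := by positivity
  have h1 : (1 + |z|) ^ m ≤ Real.exp ((m : ℝ) * |z|) := by
    calc (1 + |z|) ^ m ≤ (Real.exp |z|) ^ m := by
          refine pow_le_pow_left₀ (by positivity) ?_ m
          linarith [Real.add_one_le_exp |z|]
      _ = Real.exp ((m : ℝ) * |z|) := by rw [← Real.exp_nat_mul]
  have h2 : (m : ℝ) * |z| + -z ^ 2 / 2 ≤ (m : ℝ) ^ 2 + -(4⁻¹) * z ^ 2 := by
    nlinarith [sq_nonneg ((m : ℝ) - |z| / 2), sq_abs z]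
  have hnn : (0:ℝ) ≤ (1 + |z|) ^ m * p z := by
    have := p_nonneg z; positivity
  rw [Real.norm_of_nonneg hnn, p_def]
  calc (1 + |z|) ^ m * ((Real.sqrt (2 * π))⁻¹ * Real.exp (-z ^ 2 / 2))
      ≤ Real.exp ((m : ℝ) * |z|) * ((Real.sqrt (2 * π))⁻¹ * Real.exp (-z ^ 2 / 2)) := by
        refine mul_le_mul_of_nonneg_right h1 (by positivity)
    _ = (Real.sqrt (2 * π))⁻¹ * Real.exp ((m : ℝ) * |z| + -z ^ 2 / 2) := by
        rw [Real.exp_add]; ring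
    _ ≤ (Real.sqrt (2 * π))⁻¹ * Real.exp ((m : ℝ) ^ 2 + -(4⁻¹) * z ^ 2) := by
        refine mul_le_mul_of_nonneg_left (Real.exp_le_exp.2 h2) hc
    _ = (Real.sqrt (2 * π))⁻¹ * Real.exp ((m : ℝ) ^ 2) * Real.exp (-(4⁻¹) * z ^ 2) := by
        rw [Real.exp_add]; ring

lemma key_int (h : ℝ → ℝ) (K : ℝ) (m : ℕ) (hm : AEStronglyMeasurable h volume)
    (hb : ∀ z, |h z| ≤ K * (1 + |z|) ^ m) :
    Integrable (fun z => h z * p z) := by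
  refine ((int_poly m).const_mul K).mono' (hm.mul p_cont.aestronglyMeasurable)
    (Filter.Eventually.of_forall fun z => ?_)
  rw [Real.norm_eq_abs, abs_mul, abs_of_nonneg (p_nonneg z)]
  calc |h z| * p z ≤ (K * (1 + |z|) ^ m) * p z :=
        mul_le_mul_of_nonneg_right (hb z) (p_nonneg z)
    _ = K * ((1 + |z|) ^ m * p z) := by ring

end SGaux

open SGaux

/-- If `M_φ := sup_{x ≥ 0} E[|φ'(xZ)² + φ''(xZ)φ(xZ)|] < ∞` and `σ_w² M_φ < 1`, the variance
function `F(x) = σ_b² + σ_w² E[φ(√x Z)²]` has a unique fixed point `q ≥ 0` and the variance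
recursion converges to it from any nonnegative initial value. -/
theorem stmt0 (φ φ' φ'' : ℝ → ℝ)
    (hd1 : ∀ x, HasDerivAt φ (φ' x) x)
    (hd2 : ∀ x, HasDerivAt φ' (φ'' x) x)
    (hpoly : ∃ C : ℝ, ∃ n : ℕ, 0 ≤ C ∧ ∀ x : ℝ,
      |φ x| ≤ C * (1 + |x|) ^ n ∧ |φ' x| ≤ C * (1 + |x|) ^ n ∧ |φ'' x| ≤ C * (1 + |x|) ^ n)
    (σb σw : ℝ) (hσb : 0 ≤ σb) (hσw : 0 < σw)
    (Mφ : ℝ)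
    (hM : IsLUB {y : ℝ | ∃ x : ℝ, 0 ≤ x ∧
      y = ∫ z, |φ' (x * z) ^ 2 + φ'' (x * z) * φ (x * z)| ∂stdG} Mφ)
    (hcontr : σw ^ 2 * Mφ < 1)
    (F : ℝ → ℝ)
    (hF : ∀ x, F x = σb ^ 2 + σw ^ 2 * ∫ z, (φ (Real.sqrt x * z)) ^ 2 ∂stdG) :
    ∃ q : ℝ, 0 ≤ q ∧ F q = q ∧
      (∀ q' : ℝ, 0 ≤ q' → F q' = q' → q' = q) ∧
      ∀ q1 : ℝ, 0 ≤ q1 → Tendsto (fun l => F^[l] q1) atTop (𝓝 q) := by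
  classical
  obtain ⟨C, n, hC0, hCb⟩ := hpoly
  have hφb : ∀ x, |φ x| ≤ C * (1 + |x|) ^ n := fun x => (hCb x).1
  have hφ'b : ∀ x, |φ' x| ≤ C * (1 + |x|) ^ n := fun x => (hCb x).2.1
  have hφ''b : ∀ x, |φ'' x| ≤ C * (1 + |x|) ^ n := fun x => (hCb x).2.2
  have hφc : Continuous φ := continuous_iff_continuousAt.2 fun x => (hd1 x).continuousAt
  have hφ'c : Continuous φ' := continuous_iff_continuousAt.2 fun x => (hd2 x).continuousAt
  have hφ''m : Measurable φ'' := by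
    have h : φ'' = deriv φ' := funext fun x => ((hd2 x).deriv).symm
    rw [h]; exact measurable_deriv φ'
  -- basic bound
  have hbA : ∀ f : ℝ → ℝ, (∀ x, |f x| ≤ C * (1 + |x|) ^ n) →
      ∀ A a : ℝ, 0 ≤ A → |a| ≤ A → ∀ z, |f (a * z)| ≤ (C * (1 + A) ^ n) * (1 + |z|) ^ n := by
    intro f hf A a hA haA z
    have h1 : 1 + |a * z| ≤ (1 + A) * (1 + |z|) := by
      rw [abs_mul]
      have hz : 0 ≤ |z| := abs_nonneg z
      have h2 : |a| * |z| ≤ A * |z| := mul_le_mul_of_nonneg_right haA hz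
      nlinarith [abs_nonneg a]
    calc |f (a * z)| ≤ C * (1 + |a * z|) ^ n := hf _
      _ ≤ C * ((1 + A) * (1 + |z|)) ^ n :=
          mul_le_mul_of_nonneg_left (pow_le_pow_left₀ (by positivity) h1 n) hC0
      _ = (C * (1 + A) ^ n) * (1 + |z|) ^ n := by rw [mul_pow]; ring
  have prod_bound : ∀ f g : ℝ → ℝ, (∀ x, |f x| ≤ C * (1 + |x|) ^ n) →
      (∀ x, |g x| ≤ C * (1 + |x|) ^ n) → ∀ A a : ℝ, 0 ≤ A → |a| ≤ A → ∀ z,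
      |f (a * z) * g (a * z)| ≤ (C * (1 + A) ^ n) ^ 2 * (1 + |z|) ^ (2 * n) := by
    intro f g hf hg A a hA haA z
    rw [abs_mul]
    have h1 := hbA f hf A a hA haA z
    have h2 := hbA g hg A a hA haA z
    calc |f (a * z)| * |g (a * z)|
        ≤ ((C * (1 + A) ^ n) * (1 + |z|) ^ n) * ((C * (1 + A) ^ n) * (1 + |z|) ^ n) :=
          mul_le_mul h1 h2 (abs_nonneg _) (by positivity)
      _ = (C * (1 + A) ^ n) ^ 2 * (1 + |z|) ^ (2 * n) := by
          rw [two_mul, pow_add]; ring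
  -- the function g a = ∫ φ(a z)^2 p(z) dz
  set g : ℝ → ℝ := fun a => ∫ z, φ (a * z) ^ 2 * p z with hg_def
  -- derivative of g
  have hgd : ∀ a₀ : ℝ, HasDerivAt g (∫ z, (2 * z * (φ (a₀ * z) * φ' (a₀ * z))) * p z) a₀ := by
    intro a₀
    set A : ℝ := |a₀| + 1 with hA_def
    have hA0 : 0 ≤ A := by positivity
    have key := hasDerivAt_integral_of_dominated_loc_of_deriv_le (μ := volume)
      (F := fun a z => φ (a * z) ^ 2 * p z)
      (F' := fun a z => (2 * z * (φ (a * z) * φ' (a * z))) * p z)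
      (x₀ := a₀)
      (bound := fun z => (2 * (C * (1 + A) ^ n) ^ 2) * ((1 + |z|) ^ (2 * n + 1) * p z))
      (Metric.ball_mem_nhds a₀ one_pos)
      (Filter.Eventually.of_forall fun a =>
        (((hφc.comp (continuous_const.mul continuous_id)).pow 2).mul p_cont).aestronglyMeasurable)
      ?_ ?_ ?_ ?_ ?_
    · exact key.2
    · -- integrability of F a₀
      refine key_int (fun z => φ (a₀ * z) ^ 2) ((C * (1 + A) ^ n) ^ 2) (2 * n)
        ((hφc.comp (continuous_const.mul continuous_id)).pow 2).aestronglyMeasurable fun z => ?_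
      have h := prod_bound φ φ hφb hφb A a₀ hA0 (by rw [hA_def]; linarith) z
      calc |φ (a₀ * z) ^ 2| = |φ (a₀ * z) * φ (a₀ * z)| := by rw [sq]
        _ ≤ (C * (1 + A) ^ n) ^ 2 * (1 + |z|) ^ (2 * n) := h
    · exact (((continuous_const.mul continuous_id).mul
        ((hφc.comp (continuous_const.mul continuous_id)).mul
          (hφ'c.comp (continuous_const.mul continuous_id)))).mul p_cont).aestronglyMeasurable
    · -- bound
      refine Filter.Eventually.of_forall fun z a ha => ?_
      have haA : |a| ≤ A := by
        rw [Metric.mem_ball, Real.dist_eq] at ha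
        rw [hA_def]
        calc |a| = |a₀ + (a - a₀)| := by ring_nf
          _ ≤ |a₀| + |a - a₀| := abs_add_le _ _
          _ ≤ |a₀| + 1 := by linarith
      have hb := prod_bound φ φ' hφb hφ'b A a hA0 haA z
      rw [Real.norm_eq_abs, abs_mul, abs_of_nonneg (p_nonneg z)]
      have step : |2 * z * (φ (a * z) * φ' (a * z))|
          ≤ (2 * (1 + |z|)) * ((C * (1 + A) ^ n) ^ 2 * (1 + |z|) ^ (2 * n)) := by
        rw [abs_mul, abs_mul, abs_two]
        refine mul_le_mul ?_ hb (abs_nonneg _) (by positivity)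
        have : |z| ≤ 1 + |z| := by linarith [abs_nonneg z]
        linarith
      calc |2 * z * (φ (a * z) * φ' (a * z))| * p z
          ≤ ((2 * (1 + |z|)) * ((C * (1 + A) ^ n) ^ 2 * (1 + |z|) ^ (2 * n))) * p z :=
            mul_le_mul_of_nonneg_right step (p_nonneg z)
        _ = (2 * (C * (1 + A) ^ n) ^ 2) * ((1 + |z|) ^ (2 * n + 1) * p z) := by
            rw [pow_succ]; ring
    · exact ((int_poly (2 * n + 1)).const_mul _)
    · refine Filter.Eventually.of_forall fun z a _ => ?_
      have h0 : HasDerivAt (fun a : ℝ => φ (a * z)) (φ' (a * z) * z) a :=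
        (hd1 (a * z)).comp a (hasDerivAt_mul_const z)
      have h1 := (h0.pow 2).mul_const (p z)
      exact h1.congr_deriv (by beta_reduce; ring)
  -- Stein's identity
  set I : ℝ → ℝ := fun a => ∫ z, (φ' (a * z) ^ 2 + φ (a * z) * φ'' (a * z)) * p z with hI_def
  have hst : ∀ a : ℝ, ∫ z, (2 * z * (φ (a * z) * φ' (a * z))) * p z = 2 * a * I a := by
    intro a
    have hA0 : (0:ℝ) ≤ |a| := abs_nonneg a
    have hz : ∀ z : ℝ, HasDerivAt (fun w : ℝ => a * w) a z := fun z => by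
      simpa using (hasDerivAt_id z).const_mul a
    have h1 : ∀ z, HasDerivAt (fun z : ℝ => φ (a * z)) (φ' (a * z) * a) z := fun z =>
      (hd1 (a * z)).comp z (hz z)
    have h2 : ∀ z, HasDerivAt (fun z : ℝ => φ' (a * z)) (φ'' (a * z) * a) z := fun z =>
      (hd2 (a * z)).comp z (hz z)
    have hu : ∀ z, HasDerivAt (fun z : ℝ => 2 * (φ (a * z) * φ' (a * z)))
        (2 * ((φ' (a * z) * a) * φ' (a * z) + φ (a * z) * (φ'' (a * z) * a))) z := fun z =>
      ((h1 z).mul (h2 z)).const_mul 2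
    have hv : ∀ z : ℝ, HasDerivAt (fun z : ℝ => -p z) (z * p z) z := by
      intro z
      have := (p_deriv z).neg
      exact this.congr_deriv (by ring)
    -- measurability of pieces
    have hmz : Measurable fun z : ℝ => a * z := (measurable_id.const_mul a)
    have huv'_int : Integrable ((fun z : ℝ => 2 * (φ (a * z) * φ' (a * z))) *
        (fun z : ℝ => z * p z)) := by
      have h := key_int (fun z => 2 * (φ (a * z) * φ' (a * z)) * z)
        (2 * (C * (1 + |a|) ^ n) ^ 2) (2 * n + 1)
        ((continuous_const.mul ((hφc.comp (continuous_const.mul continuous_id)).mul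
          (hφ'c.comp (continuous_const.mul continuous_id)))).mul
          continuous_id).aestronglyMeasurable ?_
      · refine h.congr (Filter.Eventually.of_forall fun z => ?_)
        simp only [Pi.mul_apply]
        ring
      · intro z
        have hb := prod_bound φ φ' hφb hφ'b |a| a hA0 le_rfl z
        have hz1 : |z| ≤ 1 + |z| := by linarith [abs_nonneg z]
        calc |2 * (φ (a * z) * φ' (a * z)) * z|
            = 2 * |φ (a * z) * φ' (a * z)| * |z| := by
              rw [abs_mul, abs_mul, abs_two]
          _ ≤ 2 * ((C * (1 + |a|) ^ n) ^ 2 * (1 + |z|) ^ (2 * n)) * (1 + |z|) := by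
              refine mul_le_mul (mul_le_mul_of_nonneg_left hb (by norm_num)) hz1
                (abs_nonneg z) (by positivity)
          _ = 2 * (C * (1 + |a|) ^ n) ^ 2 * (1 + |z|) ^ (2 * n + 1) := by
              rw [pow_succ]; ring
    have hu'v_int : Integrable ((fun z : ℝ =>
        2 * ((φ' (a * z) * a) * φ' (a * z) + φ (a * z) * (φ'' (a * z) * a))) *
        (fun z : ℝ => -p z)) := by
      have h := key_int (fun z =>
          -(2 * ((φ' (a * z) * a) * φ' (a * z) + φ (a * z) * (φ'' (a * z) * a))))
        (4 * |a| * (C * (1 + |a|) ^ n) ^ 2) (2 * n)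
        (((((((hφ'c.measurable.comp hmz).mul (measurable_const)).mul
          (hφ'c.measurable.comp hmz)).add
          ((hφc.measurable.comp hmz).mul ((hφ''m.comp hmz).mul measurable_const))).const_mul
          2).neg).aestronglyMeasurable) ?_
      · refine h.congr (Filter.Eventually.of_forall fun z => ?_)
        simp only [Pi.mul_apply]
        ring
      · intro z
        have hb1 := prod_bound φ' φ' hφ'b hφ'b |a| a hA0 le_rfl z
        have hb2 := prod_bound φ φ'' hφb hφ''b |a| a hA0 le_rfl z
        have e1 : |φ' (a * z) * a * φ' (a * z)| ≤ |a| * ((C * (1 + |a|) ^ n) ^ 2 * (1 + |z|) ^ (2 * n)) := by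
          calc |φ' (a * z) * a * φ' (a * z)| = |a| * |φ' (a * z) * φ' (a * z)| := by
                rw [show φ' (a * z) * a * φ' (a * z) = a * (φ' (a * z) * φ' (a * z)) by ring,
                  abs_mul]
            _ ≤ |a| * ((C * (1 + |a|) ^ n) ^ 2 * (1 + |z|) ^ (2 * n)) :=
                mul_le_mul_of_nonneg_left hb1 hA0
        have e2 : |φ (a * z) * (φ'' (a * z) * a)| ≤ |a| * ((C * (1 + |a|) ^ n) ^ 2 * (1 + |z|) ^ (2 * n)) := by
          calc |φ (a * z) * (φ'' (a * z) * a)| = |a| * |φ (a * z) * φ'' (a * z)| := by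
                rw [show φ (a * z) * (φ'' (a * z) * a) = a * (φ (a * z) * φ'' (a * z)) by ring,
                  abs_mul]
            _ ≤ |a| * ((C * (1 + |a|) ^ n) ^ 2 * (1 + |z|) ^ (2 * n)) :=
                mul_le_mul_of_nonneg_left hb2 hA0
        calc |(-(2 * ((φ' (a * z) * a) * φ' (a * z) + φ (a * z) * (φ'' (a * z) * a))))|
            = 2 * |(φ' (a * z) * a) * φ' (a * z) + φ (a * z) * (φ'' (a * z) * a)| := by
              rw [abs_neg, abs_mul, abs_two]
          _ ≤ 2 * (|φ' (a * z) * a * φ' (a * z)| + |φ (a * z) * (φ'' (a * z) * a)|) := by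
              have := abs_add_le ((φ' (a * z) * a) * φ' (a * z)) (φ (a * z) * (φ'' (a * z) * a))
              linarith
          _ ≤ 2 * (2 * (|a| * ((C * (1 + |a|) ^ n) ^ 2 * (1 + |z|) ^ (2 * n)))) := by
              linarith
          _ = 4 * |a| * (C * (1 + |a|) ^ n) ^ 2 * (1 + |z|) ^ (2 * n) := by ring
    have huv_int : Integrable ((fun z : ℝ => 2 * (φ (a * z) * φ' (a * z))) *
        (fun z : ℝ => -p z)) := by
      have h := key_int (fun z => -(2 * (φ (a * z) * φ' (a * z))))
        (2 * (C * (1 + |a|) ^ n) ^ 2) (2 * n)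
        ((continuous_const.mul ((hφc.comp (continuous_const.mul continuous_id)).mul
          (hφ'c.comp (continuous_const.mul continuous_id)))).neg).aestronglyMeasurable ?_
      · refine h.congr (Filter.Eventually.of_forall fun z => ?_)
        simp only [Pi.mul_apply]
        ring
      · intro z
        have hb := prod_bound φ φ' hφb hφ'b |a| a hA0 le_rfl z
        calc |(-(2 * (φ (a * z) * φ' (a * z))))| = 2 * |φ (a * z) * φ' (a * z)| := by
              rw [abs_neg, abs_mul, abs_two]
          _ ≤ 2 * ((C * (1 + |a|) ^ n) ^ 2 * (1 + |z|) ^ (2 * n)) := by linarith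
          _ = 2 * (C * (1 + |a|) ^ n) ^ 2 * (1 + |z|) ^ (2 * n) := by ring
    have ibp := integral_mul_deriv_eq_deriv_mul_of_integrable (fun z _ => hu z) (fun z _ => hv z) huv'_int hu'v_int huv_int
    -- ibp : ∫ u z * (z * p z) = - ∫ u' z * (-p z)
    calc ∫ z, (2 * z * (φ (a * z) * φ' (a * z))) * p z
        = ∫ z, (2 * (φ (a * z) * φ' (a * z))) * (z * p z) := by
          refine integral_congr_ae (Filter.Eventually.of_forall fun z => ?_)
          ring
      _ = -∫ z, (2 * ((φ' (a * z) * a) * φ' (a * z) + φ (a * z) * (φ'' (a * z) * a))) * (-p z) :=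
          ibp
      _ = ∫ z, (2 * a) * ((φ' (a * z) ^ 2 + φ (a * z) * φ'' (a * z)) * p z) := by
          rw [← integral_neg]
          refine integral_congr_ae (Filter.Eventually.of_forall fun z => ?_)
          ring
      _ = 2 * a * I a := by rw [integral_const_mul]
  have hgd' : ∀ a : ℝ, HasDerivAt g (2 * a * I a) a := fun a => hst a ▸ hgd a
  have hgc : Continuous g := continuous_iff_continuousAt.2 fun a => (hgd' a).continuousAt
  -- F in terms of g
  have hFeq : ∀ x, F x = σb ^ 2 + σw ^ 2 * g (Real.sqrt x) := by
    intro x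
    rw [hF x, conv]
  have hFc : Continuous F := by
    have h : Continuous fun x => σb ^ 2 + σw ^ 2 * g (Real.sqrt x) :=
      continuous_const.add (continuous_const.mul (hgc.comp Real.continuous_sqrt))
    exact (funext hFeq : F = _) ▸ h
  -- bound on I
  have hIle : ∀ a : ℝ, 0 ≤ a → |I a| ≤ Mφ := by
    intro a ha
    have hmem : (∫ z, |φ' (a * z) ^ 2 + φ'' (a * z) * φ (a * z)| ∂stdG) ∈
        {y : ℝ | ∃ x : ℝ, 0 ≤ x ∧
          y = ∫ z, |φ' (x * z) ^ 2 + φ'' (x * z) * φ (x * z)| ∂stdG} := ⟨a, ha, rfl⟩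
    have hle := hM.1 hmem
    have habs : |I a| ≤ ∫ z, |φ' (a * z) ^ 2 + φ'' (a * z) * φ (a * z)| ∂stdG := by
      rw [conv]
      have h1 : |I a| ≤ ∫ z, |(φ' (a * z) ^ 2 + φ (a * z) * φ'' (a * z)) * p z| := by
        exact norm_integral_le_integral_norm (μ := volume)
          (f := fun z => (φ' (a * z) ^ 2 + φ (a * z) * φ'' (a * z)) * p z)
      refine h1.trans (le_of_eq (integral_congr_ae (Filter.Eventually.of_forall fun z => ?_)))
      have hco : φ' (a * z) ^ 2 + φ (a * z) * φ'' (a * z)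
          = φ' (a * z) ^ 2 + φ'' (a * z) * φ (a * z) := by ring
      simp only
      rw [abs_mul, abs_of_nonneg (p_nonneg z), hco]
    exact habs.trans hle
  have hMφ0 : 0 ≤ Mφ := by
    have hmem : (∫ z, |φ' (0 * z) ^ 2 + φ'' (0 * z) * φ (0 * z)| ∂stdG) ∈
        {y : ℝ | ∃ x : ℝ, 0 ≤ x ∧
          y = ∫ z, |φ' (x * z) ^ 2 + φ'' (x * z) * φ (x * z)| ∂stdG} := ⟨0, le_refl 0, rfl⟩
    refine le_trans ?_ (hM.1 hmem)
    rw [conv]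
    exact integral_nonneg fun z => mul_nonneg (abs_nonneg _) (p_nonneg z)
  -- derivative of F on (0, ∞)
  have hFd : ∀ x : ℝ, 0 < x → HasDerivAt F (σw ^ 2 * I (Real.sqrt x)) x := by
    intro x hx
    have hs : Real.sqrt x ≠ 0 := (Real.sqrt_pos.2 hx).ne'
    have h1 : HasDerivAt (fun y => g (Real.sqrt y))
        (2 * Real.sqrt x * I (Real.sqrt x) * (1 / (2 * Real.sqrt x))) x :=
      (hgd' (Real.sqrt x)).comp x (Real.hasDerivAt_sqrt hx.ne')
    have h2 := (h1.const_mul (σw ^ 2)).const_add (σb ^ 2)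
    have h3 : (fun y => σb ^ 2 + σw ^ 2 * g (Real.sqrt y)) = F := (funext hFeq).symm
    rw [h3] at h2
    exact h2.congr_deriv (by field_simp)
  -- Lipschitz estimate
  have key : ∀ x y : ℝ, 0 ≤ x → x < y → |F y - F x| ≤ σw ^ 2 * Mφ * (y - x) := by
    intro x y hx hxy
    obtain ⟨c, hc, hceq⟩ := exists_hasDerivAt_eq_slope F (fun t => σw ^ 2 * I (Real.sqrt t)) hxy
      hFc.continuousOn (fun t ht => hFd t (lt_of_le_of_lt hx ht.1))
    have hYX : y - x ≠ 0 := sub_ne_zero.2 hxy.ne'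
    have heq : F y - F x = σw ^ 2 * I (Real.sqrt c) * (y - x) := by
      rw [hceq]; field_simp
    rw [heq, abs_mul, abs_of_pos (sub_pos.2 hxy)]
    refine mul_le_mul_of_nonneg_right ?_ (by linarith)
    calc |σw ^ 2 * I (Real.sqrt c)| = σw ^ 2 * |I (Real.sqrt c)| := by
          rw [abs_mul, abs_of_nonneg (sq_nonneg σw)]
      _ ≤ σw ^ 2 * Mφ :=
          mul_le_mul_of_nonneg_left (hIle _ (Real.sqrt_nonneg c)) (sq_nonneg σw)
  -- contraction setup
  set k : NNReal := (σw ^ 2 * Mφ).toNNReal with hk_def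
  have hkc : (k : ℝ) = σw ^ 2 * Mφ := Real.coe_toNNReal _ (mul_nonneg (sq_nonneg σw) hMφ0)
  have hk1 : k < 1 := by
    rw [← NNReal.coe_lt_coe, hkc, NNReal.coe_one]
    exact hcontr
  have hlip : LipschitzOnWith k F (Ici 0) := by
    rw [lipschitzOnWith_iff_dist_le_mul]
    intro x hx y hy
    rw [Real.dist_eq, Real.dist_eq, hkc]
    rcases lt_trichotomy x y with h | h | h
    · have := key x y hx h
      rw [abs_sub_comm]
      calc |F y - F x| ≤ σw ^ 2 * Mφ * (y - x) := this
        _ = σw ^ 2 * Mφ * |x - y| := by rw [abs_sub_comm, abs_of_pos (sub_pos.2 h)]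
    · subst h; simp
    · have := key y x hy h
      calc |F x - F y| ≤ σw ^ 2 * Mφ * (x - y) := this
        _ = σw ^ 2 * Mφ * |x - y| := by rw [abs_of_pos (sub_pos.2 h)]
  have hg0 : ∀ a : ℝ, 0 ≤ g a := fun a =>
    integral_nonneg fun z => mul_nonneg (sq_nonneg _) (p_nonneg z)
  have hmaps : MapsTo F (Ici 0) (Ici 0) := by
    intro x _
    rw [mem_Ici, hFeq x]
    have := hg0 (Real.sqrt x)
    positivity
  haveI : Nonempty (Ici (0:ℝ)) := ⟨⟨0, by simp⟩⟩
  haveI : CompleteSpace (Ici (0:ℝ)) := isClosed_Ici.completeSpace_coe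
  set f : Ici (0:ℝ) → Ici (0:ℝ) := hmaps.restrict F _ _ with hf_def
  have hlipf : LipschitzWith k f := hlip.mapsToRestrict hmaps
  have hcon : ContractingWith k f := ⟨hk1, hlipf⟩
  set q0 : Ici (0:ℝ) := ContractingWith.fixedPoint f hcon with hq0_def
  have hval : ∀ y : Ici (0:ℝ), (f y : ℝ) = F y := fun y => rfl
  have hfix : F q0 = q0 := by
    have h := hcon.fixedPoint_isFixedPt
    have := congrArg Subtype.val h
    rw [← hval]
    exact this
  refine ⟨(q0 : ℝ), q0.2, hfix, ?_, ?_⟩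
  · intro q' hq' hFq'
    have hfp : Function.IsFixedPt f ⟨q', hq'⟩ := by
      apply Subtype.ext
      rw [hval]
      exact hFq'
    have := hcon.fixedPoint_unique hfp
    exact congrArg Subtype.val this
  · intro q1 hq1
    have hiter : ∀ l : ℕ, ((f^[l] ⟨q1, hq1⟩ : Ici (0:ℝ)) : ℝ) = F^[l] q1 := by
      intro l
      induction l with
      | zero => rfl
      | succ l ih =>
        rw [Function.iterate_succ_apply', Function.iterate_succ_apply', ← ih]
        exact hval _
    have ht := hcon.tendsto_iterate_fixedPoint ⟨q1, hq1⟩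
    have ht2 : Tendsto (fun l => ((f^[l] ⟨q1, hq1⟩ : Ici (0:ℝ)) : ℝ)) atTop (𝓝 (q0 : ℝ)) :=
      (continuous_subtype_val.tendsto q0).comp ht
    refine ht2.congr fun l => hiter l
end

section
/- Let λ, β ∈ ℝ, not both zero, and let φ(x) = λx for x > 0 and φ(x) = βx for x ≤ 0 (a ReLU-like activation). Then E[φ(√x Z)²] = ((λ² + β²)/2) · x for every x ≥ 0; consequently, if σ_w² < 2/(λ² + β²), then for any initial value q¹ ≥ 0, the sequence q^{l+1} = σ_b² + σ_w² E[φ(√(q^l) Z)²] converges to q = σ_b² / (1 − σ_w² (λ² + β²)/2). -/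
open MeasureTheory ProbabilityTheory Real Filter Topology Set
open scoped ENNReal NNReal

-- step 1: integral over Ioi 0 of x^2 * exp(-(1/2)x^2)
lemma int_sq_exp : Integrable (fun x : ℝ => x ^ 2 * rexp (-(1/2) * x ^ 2)) := by
  have := integrable_rpow_mul_exp_neg_mul_sq (b := 1/2) (by norm_num) (s := 2) (by norm_num)
  simpa [Real.rpow_natCast] using this

lemma int_exp' : Integrable (fun x : ℝ => rexp (-(1/2) * x ^ 2)) :=
  integrable_exp_neg_mul_sq (by norm_num)

lemma ioi_eval : ∫ x in Ioi (0:ℝ), x ^ 2 * rexp (-(1/2) * x ^ 2) = Real.sqrt (2*π) / 2 := by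
  have hderiv : ∀ x ∈ Ici (0:ℝ), HasDerivAt (fun x : ℝ => -x * rexp (-(1/2) * x ^ 2))
      (x ^ 2 * rexp (-(1/2) * x ^ 2) - rexp (-(1/2) * x ^ 2)) x := by
    intro x _
    have h1 : HasDerivAt (fun x : ℝ => -(1/2) * x ^ 2) (-(1/2) * (2 * x)) x := by
      simpa using ((hasDerivAt_pow 2 x).const_mul (-(1/2):ℝ))
    have h2 := (h1.exp)
    have h3 := ((hasDerivAt_id x).neg).mul h2
    refine h3.congr_deriv ?_
    simp only [Pi.neg_apply, id]
    ring
  have htend : Tendsto (fun x : ℝ => -x * rexp (-(1/2) * x ^ 2)) atTop (𝓝 0) := by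
    have h := rpow_mul_exp_neg_mul_sq_isLittleO_exp_neg (b := 1/2) (by norm_num) (s := 1)
    have h2 : Tendsto (fun x : ℝ => rexp (-(1/2) * x)) atTop (𝓝 0) := by
      apply Real.tendsto_exp_atBot.comp
      exact (tendsto_const_mul_atBot_of_neg (by norm_num)).mpr tendsto_id
    have h3 := h.trans_tendsto h2
    have h4 : Tendsto (fun x : ℝ => x * rexp (-(1/2) * x ^ 2)) atTop (𝓝 0) := by
      apply h3.congr'
      filter_upwards [eventually_gt_atTop (0:ℝ)] with x hx
      rw [Real.rpow_one]
    simpa using h4.neg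
  have key := integral_Ioi_of_hasDerivAt_of_tendsto' (f' := fun x =>
      x ^ 2 * rexp (-(1/2) * x ^ 2) - rexp (-(1/2) * x ^ 2)) hderiv
      ((int_sq_exp.sub int_exp').integrableOn) htend
  simp only [neg_zero, zero_mul, sub_zero, zero_sub] at key
  -- key : ∫ x in Ioi 0, (x^2*e - e) = 0 - 0
  rw [integral_sub (int_sq_exp.integrableOn) (int_exp'.integrableOn)] at key
  have hg : ∫ x in Ioi (0:ℝ), rexp (-(1/2) * x ^ 2) = Real.sqrt (2*π) / 2 := by
    rw [integral_gaussian_Ioi (1/2), show π/(1/2:ℝ) = 2*π by ring]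
  have : π / (1/2) = 2 * π := by ring
  rw [hg] at key
  linarith [key]

lemma iic_eval : ∫ x in Iic (0:ℝ), x ^ 2 * rexp (-(1/2) * x ^ 2) = Real.sqrt (2*π) / 2 := by
  rw [← ioi_eval, ← neg_zero, ← integral_comp_neg_Ioi]
  norm_num

lemma gauss_half (lam bet : ℝ) :
    ∫ z, (if 0 < z then lam ^ 2 else bet ^ 2) * z ^ 2 ∂stdG = (lam ^ 2 + bet ^ 2) / 2 := by
  have hpdf : stdG = (volume : Measure ℝ).withDensity
      (fun x => ((gaussianPDFReal 0 1 x).toNNReal : ℝ≥0∞)) := by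
    rw [stdG, gaussianReal_of_var_ne_zero 0 one_ne_zero]
    rfl
  rw [hpdf, integral_withDensity_eq_integral_smul
    ((measurable_gaussianPDFReal 0 1).real_toNNReal)]
  have hpt : ∀ z : ℝ, ((gaussianPDFReal 0 1 z).toNNReal : ℝ)
      • ((if 0 < z then lam ^ 2 else bet ^ 2) * z ^ 2)
      = (Real.sqrt (2*π))⁻¹ * ((if 0 < z then lam ^ 2 else bet ^ 2)
          * (z ^ 2 * rexp (-(1/2) * z ^ 2))) := by
    intro z
    rw [smul_eq_mul, Real.coe_toNNReal _ (gaussianPDFReal_nonneg 0 1 z)]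
    unfold gaussianPDFReal
    push_cast
    rw [mul_one, sub_zero]
    rw [show -z ^ 2 / (2*1) = -(1/2) * z ^ 2 by ring]
    ring
  simp_rw [NNReal.smul_def, hpt]
  rw [integral_const_mul]
  have hIoi : IntegrableOn (fun z : ℝ => (if 0 < z then lam ^ 2 else bet ^ 2)
      * (z ^ 2 * rexp (-(1/2) * z ^ 2))) (Ioi 0) := by
    apply ((int_sq_exp.const_mul (lam ^ 2)).integrableOn (s := Ioi 0)).congr_fun ?_ measurableSet_Ioi
    intro z hz; simp [hz.out]
  have hIic : IntegrableOn (fun z : ℝ => (if 0 < z then lam ^ 2 else bet ^ 2)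
      * (z ^ 2 * rexp (-(1/2) * z ^ 2))) (Iic 0) := by
    apply ((int_sq_exp.const_mul (bet ^ 2)).integrableOn (s := Iic 0)).congr_fun ?_ measurableSet_Iic
    intro z hz; simp [not_lt.mpr hz.out]
  rw [← intervalIntegral.integral_Iic_add_Ioi hIic hIoi]
  have h1 : ∫ z in Ioi (0:ℝ), (if 0 < z then lam ^ 2 else bet ^ 2)
      * (z ^ 2 * rexp (-(1/2) * z ^ 2)) = lam ^ 2 * (Real.sqrt (2*π) / 2) := by
    rw [← ioi_eval, ← integral_const_mul]
    apply setIntegral_congr_fun measurableSet_Ioi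
    intro z hz; simp [hz.out]
  have h2 : ∫ z in Iic (0:ℝ), (if 0 < z then lam ^ 2 else bet ^ 2)
      * (z ^ 2 * rexp (-(1/2) * z ^ 2)) = bet ^ 2 * (Real.sqrt (2*π) / 2) := by
    rw [← iic_eval, ← integral_const_mul]
    apply setIntegral_congr_fun measurableSet_Iic
    intro z hz; simp [not_lt.mpr hz.out]
  rw [h1, h2]
  have hs : Real.sqrt (2*π) ≠ 0 := by
    positivity
  field_simp
  ring

/-- For a ReLU-like activation `φ(x) = λx (x>0), βx (x≤0)`, `E[φ(√x Z)²] = ((λ²+β²)/2) x` for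
`x ≥ 0`; consequently, if `σ_w² < 2/(λ²+β²)` then the variance recursion converges to
`σ_b² / (1 − σ_w²(λ²+β²)/2)` from any nonnegative initial value. -/
theorem stmt4 (lam bet : ℝ) (hne : ¬(lam = 0 ∧ bet = 0))
    (φ : ℝ → ℝ) (hφ : ∀ x, φ x = if 0 < x then lam * x else bet * x) :
    (∀ x : ℝ, 0 ≤ x →
      (∫ z, (φ (Real.sqrt x * z)) ^ 2 ∂stdG) = (lam ^ 2 + bet ^ 2) / 2 * x) ∧
    ∀ σb σw : ℝ, 0 ≤ σb → 0 < σw → σw ^ 2 < 2 / (lam ^ 2 + bet ^ 2) →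
      ∀ q : ℕ → ℝ, 0 ≤ q 0 →
        (∀ l, q (l + 1) = σb ^ 2 + σw ^ 2 * ∫ z, (φ (Real.sqrt (q l) * z)) ^ 2 ∂stdG) →
        Tendsto q atTop (𝓝 (σb ^ 2 / (1 - σw ^ 2 * (lam ^ 2 + bet ^ 2) / 2))) := by
  have part1 : ∀ x : ℝ, 0 ≤ x →
      (∫ z, (φ (Real.sqrt x * z)) ^ 2 ∂stdG) = (lam ^ 2 + bet ^ 2) / 2 * x := by
    intro x hx0
    have hpt : ∀ z : ℝ, (φ (Real.sqrt x * z)) ^ 2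
        = x * ((if 0 < z then lam ^ 2 else bet ^ 2) * z ^ 2) := by
      intro z
      rw [hφ]
      rcases eq_or_lt_of_le hx0 with h0 | hx
      · simp [← h0]
      · have hs := Real.sqrt_pos.mpr hx
        have hsq : Real.sqrt x ^ 2 = x := Real.sq_sqrt hx.le
        by_cases hz : 0 < z
        · rw [if_pos (mul_pos hs hz), if_pos hz, mul_pow, mul_pow, hsq]; ring
        · rw [if_neg (not_lt.mpr (mul_nonpos_of_nonneg_of_nonpos hs.le (not_lt.mp hz))),
            if_neg hz, mul_pow, mul_pow, hsq]
          ring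
    simp_rw [hpt]
    rw [integral_const_mul, gauss_half lam bet]
    ring
  refine ⟨part1, ?_⟩
  intro σb σw hσb hσw hlt q hq0 hrec
  have hsum : 0 < lam ^ 2 + bet ^ 2 := by
    rcases not_and_or.mp hne with h | h
    · positivity
    · positivity
  set c : ℝ := σw ^ 2 * ((lam ^ 2 + bet ^ 2) / 2) with hc
  have hc0 : 0 ≤ c := by positivity
  have hc1 : c < 1 := by
    have h2 : σw ^ 2 * (lam ^ 2 + bet ^ 2) < (2 / (lam ^ 2 + bet ^ 2)) * (lam ^ 2 + bet ^ 2) :=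
      mul_lt_mul_of_pos_right hlt hsum
    rw [div_mul_cancel₀ _ hsum.ne'] at h2
    rw [hc]; linarith
  have hpos : ∀ l, 0 ≤ q l := by
    intro l
    induction l with
    | zero => exact hq0
    | succ n ih =>
      rw [hrec n, part1 _ ih]
      have : 0 ≤ σw ^ 2 * ((lam ^ 2 + bet ^ 2) / 2 * q n) :=
        mul_nonneg (sq_nonneg _) (mul_nonneg (by positivity) ih)
      nlinarith [sq_nonneg σb]
  have hrec' : ∀ l, q (l + 1) = σb ^ 2 + c * q l := by
    intro l
    rw [hrec l, part1 _ (hpos l), hc]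
    ring
  set L : ℝ := σb ^ 2 / (1 - σw ^ 2 * (lam ^ 2 + bet ^ 2) / 2) with hL
  have hcne : 1 - c ≠ 0 := by intro h; linarith
  have hLc : L = σb ^ 2 / (1 - c) := by rw [hL, hc]; ring_nf
  clear_value c
  have hfix : σb ^ 2 + c * L = L := by
    rw [hLc]
    field_simp
    ring
  clear_value L
  have hform : ∀ n, q n = L + c ^ n * (q 0 - L) := by
    intro n
    induction n with
    | zero => simp
    | succ n ih =>
      rw [hrec' n, ih]
      linear_combination hfix
  have htends : Tendsto (fun n : ℕ => L + c ^ n * (q 0 - L)) atTop (𝓝 L) := by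
    have h0 : Tendsto (fun n : ℕ => c ^ n) atTop (𝓝 0) :=
      tendsto_pow_atTop_nhds_zero_of_lt_one hc0 hc1
    have := (h0.mul_const (q 0 - L)).const_add L
    simpa using this
  exact (funext hform : q = _) ▸ htends
end

section
/- Let λ, β ∈ ℝ, not both zero, and let φ(x) = λx for x > 0 and φ(x) = βx for x ≤ 0 (a ReLU-like activation), with derivative φ'(x) = λ for x > 0 and β for x < 0. Then E[φ'(Z)²] = (λ² + β²)/2, and if σ_w² = 2/(λ² + β²) then the variance function satisfies F(x) = σ_b² + x for all x ≥ 0; in particular, F has a fixed point if and only if σ_b = 0, in which case F(x) = x for all x ≥ 0. Hence the edge of chaos for φ is the singleton {(σ_b, σ_w) = (0, 1/√(E[φ'(Z)²]))}. -/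
open MeasureTheory ProbabilityTheory Real Filter Topology Set
open scoped NNReal ENNReal

/-- The variance function `F(x) = σ_b² + σ_w² E[φ(√x Z)²]` of an activation `φ`. -/
noncomputable def varF (φ : ℝ → ℝ) (σb σw x : ℝ) : ℝ :=
  σb ^ 2 + σw ^ 2 * ∫ z, (φ (Real.sqrt x * z)) ^ 2 ∂stdG


noncomputable def rpdf (x : ℝ) : ℝ := (Real.sqrt (2 * π))⁻¹ * Real.exp (-(1/2) * x ^ 2)

lemma rpdf_eq : gaussianPDFReal 0 1 = rpdf := by
  funext x
  simp only [gaussianPDFReal, rpdf, NNReal.coe_one, mul_one, sub_zero]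
  ring_nf

lemma rpdf_nonneg (x : ℝ) : 0 ≤ rpdf x := by unfold rpdf; positivity

lemma rpdf_even (x : ℝ) : rpdf (-x) = rpdf x := by simp [rpdf]

lemma rpdf_measurable : Measurable rpdf := by
  unfold rpdf; fun_prop

lemma integral_stdG (g : ℝ → ℝ) : ∫ z, g z ∂stdG = ∫ x, rpdf x * g x := by
  rw [stdG, gaussianReal_of_var_ne_zero 0 one_ne_zero]
  have h1 : gaussianPDF 0 1 = fun x => ((Real.toNNReal (rpdf x) : ℝ≥0) : ℝ≥0∞) := by
    funext x; rw [gaussianPDF, rpdf_eq, ENNReal.ofReal]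
  rw [h1, integral_withDensity_eq_integral_smul (rpdf_measurable.real_toNNReal) g]
  congr 1
  funext x
  rw [NNReal.smul_def, Real.coe_toNNReal _ (rpdf_nonneg x), smul_eq_mul]

lemma int_exp_Ioi : ∫ x in Ioi (0:ℝ), Real.exp (-(1/2) * x ^ 2) = Real.sqrt (2 * π) / 2 := by
  have := integral_gaussian_Ioi (1/2)
  norm_num at this ⊢
  rw [this]
  ring

lemma hInt_exp : Integrable (fun x : ℝ => Real.exp (-(1/2) * x ^ 2)) :=
  integrable_exp_neg_mul_sq (by norm_num)

lemma hInt_x2 : Integrable (fun x : ℝ => x ^ 2 * Real.exp (-(1/2) * x ^ 2)) := by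
  have := integrable_rpow_mul_exp_neg_mul_sq (b := 1/2) (by norm_num) (s := 2) (by norm_num)
  have h2 : ∀ x : ℝ, x ^ (2:ℝ) = x ^ (2:ℕ) := fun x => by
    rw [show ((2:ℝ) = ((2:ℕ):ℝ)) by norm_num, Real.rpow_natCast]
  simpa [h2] using this

lemma sqrt2pi_pos : (0:ℝ) < Real.sqrt (2 * π) := Real.sqrt_pos.mpr (by positivity)

lemma int_rpdf_Ioi : ∫ x in Ioi (0:ℝ), rpdf x = 1 / 2 := by
  unfold rpdf
  rw [integral_const_mul, int_exp_Ioi]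
  field_simp

lemma ftc : ∫ x in Ioi (0:ℝ),
    (x ^ 2 * Real.exp (-(1/2) * x ^ 2) - Real.exp (-(1/2) * x ^ 2)) = 0 := by
  have hG : ∀ x : ℝ, HasDerivAt (fun x : ℝ => -x * Real.exp (-(1/2) * x ^ 2))
      (x ^ 2 * Real.exp (-(1/2) * x ^ 2) - Real.exp (-(1/2) * x ^ 2)) x := by
    intro x
    have h1 : HasDerivAt (fun x : ℝ => -(1/2) * x ^ 2) (-x) x := by
      have := ((hasDerivAt_pow 2 x).const_mul (-(1/2) : ℝ))
      refine this.congr_deriv ?_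
      ring
    have he := h1.exp
    have := (hasDerivAt_id x).neg.mul he
    refine this.congr_deriv ?_
    simp only [Pi.neg_apply, id]
    ring
  have hT : Tendsto (fun x : ℝ => -x * Real.exp (-(1/2) * x ^ 2)) atTop (𝓝 0) := by
    have h2 : Tendsto (fun x : ℝ => x * Real.exp (-x)) atTop (𝓝 0) := by
      simpa using tendsto_pow_mul_exp_neg_atTop_nhds_zero 1
    have h3 : Tendsto (fun x : ℝ => x * Real.exp (-(1/2) * x ^ 2)) atTop (𝓝 0) := by
      apply squeeze_zero' (t₀ := atTop)
      · filter_upwards [eventually_ge_atTop (0:ℝ)] with x hx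
        positivity
      · filter_upwards [eventually_ge_atTop (2:ℝ)] with x hx
        have hx0 : (0:ℝ) ≤ x := by linarith
        have : -(1/2) * x ^ 2 ≤ -x := by nlinarith
        exact mul_le_mul_of_nonneg_left (Real.exp_le_exp.mpr this) hx0
      · exact h2
    have := h3.neg
    simpa using this
  have hint : IntegrableOn (fun x : ℝ =>
      x ^ 2 * Real.exp (-(1/2) * x ^ 2) - Real.exp (-(1/2) * x ^ 2)) (Ioi 0) :=
    (hInt_x2.sub hInt_exp).integrableOn
  have := integral_Ioi_of_hasDerivAt_of_tendsto' (fun x _ => hG x) hint hT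
  simpa using this

lemma int_x2_Ioi : ∫ x in Ioi (0:ℝ), x ^ 2 * Real.exp (-(1/2) * x ^ 2)
    = Real.sqrt (2 * π) / 2 := by
  have h := ftc
  rw [integral_sub hInt_x2.integrableOn hInt_exp.integrableOn, sub_eq_zero] at h
  rw [h, int_exp_Ioi]

lemma rpdf_x2_integrable : Integrable (fun x : ℝ => rpdf x * x ^ 2) := by
  unfold rpdf
  have := (hInt_x2.const_mul (Real.sqrt (2 * π))⁻¹)
  apply this.congr
  filter_upwards with x
  ring

lemma rpdf_integrable : Integrable rpdf := by
  unfold rpdf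
  exact hInt_exp.const_mul _

lemma int_rpdf_x2_Ioi : ∫ x in Ioi (0:ℝ), rpdf x * x ^ 2 = 1 / 2 := by
  unfold rpdf
  have : ∀ x : ℝ, (Real.sqrt (2 * π))⁻¹ * Real.exp (-(1/2) * x ^ 2) * x ^ 2
      = (Real.sqrt (2 * π))⁻¹ * (x ^ 2 * Real.exp (-(1/2) * x ^ 2)) := fun x => by ring
  simp_rw [this]
  rw [integral_const_mul, int_x2_Ioi]
  field_simp

lemma key (a b : ℝ) (w : ℝ → ℝ) (hw : Measurable w) (heven : ∀ x, w (-x) = w x)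
    (hint : Integrable (fun x => rpdf x * w x))
    (hioi : ∫ x in Ioi (0:ℝ), rpdf x * w x = 1 / 2) :
    ∫ z, (if 0 < z then a else b) * w z ∂stdG = (a + b) / 2 := by
  rw [integral_stdG]
  set g := fun x : ℝ => rpdf x * ((if 0 < x then a else b) * w x) with hg_def
  have hmeas : AEStronglyMeasurable g volume :=
    (rpdf_measurable.mul
      ((measurable_const.ite measurableSet_Ioi measurable_const).mul hw)).aestronglyMeasurable
  have hg : Integrable g := by
    refine (hint.abs.const_mul (|a| + |b|)).mono' hmeas ?_
    filter_upwards with x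
    have hle : |if 0 < x then a else b| ≤ |a| + |b| := by
      split
      · exact le_add_of_nonneg_right (abs_nonneg _)
      · exact le_add_of_nonneg_left (abs_nonneg _)
    have : ‖g x‖ = |if 0 < x then a else b| * |rpdf x * w x| := by
      rw [Real.norm_eq_abs, hg_def]
      simp only [abs_mul]
      ring
    rw [this]
    exact mul_le_mul_of_nonneg_right hle (abs_nonneg _)
  rw [← intervalIntegral.integral_Iic_add_Ioi hg.integrableOn hg.integrableOn]
  have h1 : ∫ x in Ioi (0:ℝ), g x = a * ∫ x in Ioi (0:ℝ), rpdf x * w x := by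
    rw [← integral_const_mul]
    apply setIntegral_congr_fun measurableSet_Ioi
    intro x hx
    simp only [hg_def, if_pos (mem_Ioi.mp hx)]
    ring
  have h2 : ∫ x in Iic (0:ℝ), g x = b * ∫ x in Ioi (0:ℝ), rpdf x * w x := by
    have e1 : ∫ x in Iic (0:ℝ), g x = ∫ x in Iic (0:ℝ), b * (rpdf x * w x) := by
      apply setIntegral_congr_fun measurableSet_Iic
      intro x hx
      simp only [hg_def, if_neg (not_lt.mpr (mem_Iic.mp hx))]
      ring
    have e2 := integral_comp_neg_Ioi 0 (fun x => b * (rpdf x * w x))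
    simp only [neg_zero, rpdf_even, heven] at e2
    rw [e1, ← e2, integral_const_mul]
  rw [h1, h2, hioi]
  ring

lemma key_const (a b : ℝ) : ∫ z, (if 0 < z then a else b) ∂stdG = (a + b) / 2 := by
  have := key a b (fun _ => 1) measurable_const (fun _ => rfl)
    (by simpa using rpdf_integrable) (by simpa using int_rpdf_Ioi)
  simpa using this

lemma key_sq (a b : ℝ) : ∫ z, (if 0 < z then a else b) * z ^ 2 ∂stdG = (a + b) / 2 :=
  key a b (fun z => z ^ 2) (by fun_prop) (fun x => by ring) rpdf_x2_integrable int_rpdf_x2_Ioi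

lemma stdG_ae_ne_zero : ∀ᵐ z ∂stdG, z ≠ 0 := by
  have h0 : stdG {(0:ℝ)} = 0 := by
    rw [stdG]
    exact (gaussianReal_absolutelyContinuous 0 one_ne_zero) (by simp)
  rw [ae_iff]
  simpa [Set.setOf_eq_eq_singleton] using h0

lemma intphi'_scaled (lam bet : ℝ) (φ' : ℝ → ℝ) (hφ'p : ∀ x : ℝ, 0 < x → φ' x = lam)
    (hφ'n : ∀ x : ℝ, x < 0 → φ' x = bet) (c : ℝ) (hc : 0 < c) :
    ∫ z, (φ' (c * z)) ^ 2 ∂stdG = (lam ^ 2 + bet ^ 2) / 2 := by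
  have h : ∫ z, (φ' (c * z)) ^ 2 ∂stdG
      = ∫ z, (if 0 < z then lam ^ 2 else bet ^ 2) ∂stdG := by
    apply integral_congr_ae
    filter_upwards [stdG_ae_ne_zero] with z hz
    rcases hz.lt_or_gt with h | h
    · rw [hφ'n (c * z) (by nlinarith), if_neg (not_lt.mpr h.le)]
    · rw [hφ'p (c * z) (by nlinarith), if_pos h]
  rw [h, key_const]

lemma varF_eq (lam bet : ℝ) (φ : ℝ → ℝ)
    (hφ : ∀ x, φ x = if 0 < x then lam * x else bet * x)
    (σb σw x : ℝ) (hx : 0 ≤ x) :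
    varF φ σb σw x = σb ^ 2 + σw ^ 2 * (x * ((lam ^ 2 + bet ^ 2) / 2)) := by
  rcases hx.eq_or_lt with h | h
  · subst h
    unfold varF
    simp only [Real.sqrt_zero, zero_mul]
    rw [hφ 0]
    simp
  · have hs : 0 < Real.sqrt x := Real.sqrt_pos.mpr h
    have hfun : (fun z : ℝ => (φ (Real.sqrt x * z)) ^ 2)
        = fun z => (if 0 < z then lam ^ 2 * x else bet ^ 2 * x) * z ^ 2 := by
      funext z
      rw [hφ]
      by_cases hz : 0 < z
      · rw [if_pos (mul_pos hs hz), if_pos hz, mul_pow, mul_pow, Real.sq_sqrt hx]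
        ring
      · have hz' : ¬ (0 < Real.sqrt x * z) := by
          intro hcon
          apply hz
          nlinarith
        rw [if_neg hz', if_neg hz, mul_pow, mul_pow, Real.sq_sqrt hx]
        ring
    unfold varF
    rw [hfun, key_sq]
    ring

/-- For a ReLU-like activation: `E[φ'(Z)²] = (λ²+β²)/2`; if `σ_w² = 2/(λ²+β²)` then
`F(x) = σ_b² + x` on `x ≥ 0`, so `F` has a fixed point iff `σ_b = 0`, in which case `F(x) = x`;
and the edge of chaos is the singleton `{(0, 1/√(E[φ'(Z)²]))}`. -/
theorem stmt5 (lam bet : ℝ) (hne : ¬(lam = 0 ∧ bet = 0))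
    (φ φ' : ℝ → ℝ)
    (hφ : ∀ x, φ x = if 0 < x then lam * x else bet * x)
    (hφ'p : ∀ x : ℝ, 0 < x → φ' x = lam)
    (hφ'n : ∀ x : ℝ, x < 0 → φ' x = bet) :
    (∫ z, (φ' z) ^ 2 ∂stdG) = (lam ^ 2 + bet ^ 2) / 2 ∧
    (∀ σb σw : ℝ, 0 ≤ σb → 0 < σw → σw ^ 2 = 2 / (lam ^ 2 + bet ^ 2) →
      (∀ x : ℝ, 0 ≤ x → varF φ σb σw x = σb ^ 2 + x) ∧
      ((∃ x : ℝ, 0 ≤ x ∧ varF φ σb σw x = x) ↔ σb = 0) ∧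
      (σb = 0 → ∀ x : ℝ, 0 ≤ x → varF φ σb σw x = x)) ∧
    {p : ℝ × ℝ | 0 ≤ p.1 ∧ 0 < p.2 ∧ ∃ q : ℝ, 0 < q ∧ varF φ p.1 p.2 q = q ∧
        p.2 ^ 2 * ∫ z, (φ' (Real.sqrt q * z)) ^ 2 ∂stdG = 1} =
      {((0 : ℝ), 1 / Real.sqrt (∫ z, (φ' z) ^ 2 ∂stdG))} := by
  have hsum : (0:ℝ) < lam ^ 2 + bet ^ 2 := by
    rcases not_and_or.mp hne with h | h
    · positivity
    · positivity
  have H1 : (∫ z, (φ' z) ^ 2 ∂stdG) = (lam ^ 2 + bet ^ 2) / 2 := by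
    simpa using intphi'_scaled lam bet φ' hφ'p hφ'n 1 one_pos
  refine ⟨H1, ?_, ?_⟩
  · intro σb σw hσb hσw hσw2
    have A : ∀ x : ℝ, 0 ≤ x → varF φ σb σw x = σb ^ 2 + x := by
      intro x hx
      rw [varF_eq lam bet φ hφ σb σw x hx, hσw2]
      congr 1
      field_simp
    refine ⟨A, ⟨?_, ?_⟩, ?_⟩
    · rintro ⟨x, hx, hfix⟩
      rw [A x hx] at hfix
      have h2 : σb ^ 2 = 0 := by linarith
      exact sq_eq_zero_iff.mp h2
    · intro h
      exact ⟨0, le_rfl, by rw [A 0 le_rfl, h]; ring⟩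
    · intro h x hx
      rw [A x hx, h]; ring
  · ext p
    obtain ⟨sb, sw⟩ := p
    simp only [mem_setOf_eq, mem_singleton_iff, Prod.mk.injEq]
    constructor
    · rintro ⟨h1, h2, q, hq, hfix, hedge⟩
      rw [intphi'_scaled lam bet φ' hφ'p hφ'n (Real.sqrt q) (Real.sqrt_pos.mpr hq)] at hedge
      have hsw2 : sw ^ 2 = 2 / (lam ^ 2 + bet ^ 2) := by
        field_simp at hedge ⊢
        linarith
      rw [varF_eq lam bet φ hφ sb sw q hq.le, hsw2] at hfix
      have hq' : 2 / (lam ^ 2 + bet ^ 2) * (q * ((lam ^ 2 + bet ^ 2) / 2)) = q := by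
        field_simp
      rw [hq'] at hfix
      have hsb : sb = 0 := by
        have : sb ^ 2 = 0 := by linarith
        exact sq_eq_zero_iff.mp this
      refine ⟨hsb, ?_⟩
      rw [H1]
      have hsww : sw = Real.sqrt (sw ^ 2) := (Real.sqrt_sq h2.le).symm
      rw [hsww, hsw2,
        show (2 : ℝ) / (lam ^ 2 + bet ^ 2) = ((lam ^ 2 + bet ^ 2) / 2)⁻¹ from
          (inv_div _ _).symm]
      rw [Real.sqrt_inv, one_div]
    · rintro ⟨hsb, hsw⟩
      subst hsb; subst hsw
      rw [H1]
      have hs2 : (0:ℝ) < (lam ^ 2 + bet ^ 2) / 2 := by linarith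
      have hw2 : (1 / Real.sqrt ((lam ^ 2 + bet ^ 2) / 2)) ^ 2
          = 2 / (lam ^ 2 + bet ^ 2) := by
        rw [div_pow, one_pow, Real.sq_sqrt hs2.le, one_div_div]
      refine ⟨le_rfl, one_div_pos.mpr (Real.sqrt_pos.mpr hs2), 1, one_pos, ?_, ?_⟩
      · rw [varF_eq lam bet φ hφ _ _ 1 zero_le_one, hw2]
        field_simp
        norm_num
      · rw [Real.sqrt_one]
        simp only [one_mul]
        rw [H1, hw2]
        field_simp
end

section
/- For every x ∈ [0,1], 2 · E[max(Z₁, 0) · max(x Z₁ + √(1−x²) Z₂, 0)] = (1/π) x arcsin(x) + (1/π) √(1−x²) + x/2, where Z₁, Z₂ are i.i.d. standard Gaussian random variables. -/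
open MeasureTheory ProbabilityTheory Real Filter Topology Set
open scoped ENNReal NNReal

/-- The standard Gaussian measure on `ℝ × ℝ` (law of a pair of i.i.d. standard Gaussians). -/
noncomputable def stdG2 : Measure (ℝ × ℝ) := stdG.prod stdG

/-- The standard Gaussian density. -/
noncomputable def d1 : ℝ → ℝ := gaussianPDFReal 0 1

lemma d1_eq (a : ℝ) : d1 a = (Real.sqrt (2 * π))⁻¹ * rexp (-a ^ 2 / 2) := by
  unfold d1 gaussianPDFReal
  norm_num

instance : SigmaFinite stdG := by unfold stdG; infer_instance

lemma stdG2_eq : stdG2 =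
    (volume : Measure (ℝ × ℝ)).withDensity
      (fun p => ((d1 p.1 * d1 p.2).toNNReal : ℝ≥0∞)) := by
  unfold stdG2 stdG
  refine Measure.prod_eq (fun s t hs ht => ?_)
  rw [withDensity_apply _ (hs.prod ht), Measure.volume_eq_prod, ← Measure.prod_restrict,
    gaussianReal_apply 0 one_ne_zero s, gaussianReal_apply 0 one_ne_zero t]
  have hd : ∀ a b : ℝ, ((d1 a * d1 b).toNNReal : ℝ≥0∞) = gaussianPDF 0 1 a * gaussianPDF 0 1 b := by
    intro a b
    rw [gaussianPDF, gaussianPDF, ← ENNReal.ofReal_mul (gaussianPDFReal_nonneg _ _ _)]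
    rfl
  simp_rw [hd]
  rw [lintegral_prod_mul ((measurable_gaussianPDF 0 1).aemeasurable)
    ((measurable_gaussianPDF 0 1).aemeasurable)]

lemma integral_stdG2 (F : ℝ × ℝ → ℝ) :
    ∫ p, F p ∂stdG2 = ∫ p, (d1 p.1 * d1 p.2) * F p := by
  rw [stdG2_eq, integral_withDensity_eq_integral_smul]
  · refine integral_congr_ae (ae_of_all _ fun p => ?_)
    show (d1 p.1 * d1 p.2).toNNReal • F p = _
    rw [NNReal.smul_def, smul_eq_mul]
    congr 1
    exact Real.coe_toNNReal _
      (mul_nonneg (gaussianPDFReal_nonneg _ _ _) (gaussianPDFReal_nonneg _ _ _))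
  · exact (((measurable_gaussianPDFReal 0 1).comp measurable_fst).mul
      ((measurable_gaussianPDFReal 0 1).comp measurable_snd)).real_toNNReal

lemma radial : ∫ r in Ioi (0:ℝ), r ^ 3 * rexp (-r ^ 2 / 2) = 2 := by
  have hderiv : ∀ r ∈ Ici (0:ℝ),
      HasDerivAt (fun r : ℝ => -(r ^ 2 + 2) * rexp (-r ^ 2 / 2)) (r ^ 3 * rexp (-r ^ 2 / 2)) r := by
    intro r _
    have h1 : HasDerivAt (fun r : ℝ => -(r ^ 2 + 2)) (-(2 * r)) r := by
      exact (((hasDerivAt_pow 2 r).add_const 2).neg).congr_deriv (by norm_num)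
    have h2 : HasDerivAt (fun r : ℝ => rexp (-r ^ 2 / 2)) (rexp (-r ^ 2 / 2) * (-(2 * r) / 2)) r := by
      have hin : HasDerivAt (fun r : ℝ => -r ^ 2 / 2) (-(2 * r) / 2) r := by
        simpa using ((hasDerivAt_pow 2 r).neg.div_const 2)
      exact hin.exp
    have := h1.mul h2
    exact this.congr_deriv (by ring)
  have hint : IntegrableOn (fun r : ℝ => r ^ 3 * rexp (-r ^ 2 / 2)) (Ioi 0) := by
    have := integrableOn_rpow_mul_exp_neg_mul_sq (b := 1/2) (by norm_num) (s := 3) (by norm_num)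
    refine this.congr_fun (fun r hr => ?_) measurableSet_Ioi
    have h3 : r ^ (3:ℝ) = r ^ (3:ℕ) := by
      rw [← Real.rpow_natCast r 3]; norm_num
    beta_reduce; rw [h3]; ring_nf
  have htend : Tendsto (fun r : ℝ => -(r ^ 2 + 2) * rexp (-r ^ 2 / 2)) atTop (𝓝 0) := by
    have h0 : Tendsto (fun u : ℝ => -((2 * (u ^ 1 * rexp (-u))) + 2 * rexp (-u))) atTop (𝓝 0) := by
      have := ((tendsto_pow_mul_exp_neg_atTop_nhds_zero 1).const_mul 2).add
        ((tendsto_exp_neg_atTop_nhds_zero).const_mul 2)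
      simpa using this.neg
    have hq : Tendsto (fun r : ℝ => r ^ 2 / 2) atTop atTop :=
      (tendsto_pow_atTop (two_ne_zero)).atTop_div_const (by norm_num)
    have := h0.comp hq
    refine this.congr (fun r => ?_)
    simp only [Function.comp_apply, pow_one]
    rw [show -r ^ 2 / 2 = -(r ^ 2 / 2) by ring]
    ring
  have := integral_Ioi_of_hasDerivAt_of_tendsto' hderiv hint htend
  rw [this]
  norm_num

lemma angular {x : ℝ} (hx0 : 0 ≤ x) (hx1 : x ≤ 1) :
    ∫ θ in Ioo (-π) π, max (cos θ) 0 * max (x * cos θ + Real.sqrt (1 - x ^ 2) * sin θ) 0 =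
      x * π / 4 + Real.sqrt (1 - x ^ 2) / 2 + x * Real.arcsin x / 2 := by
  set s := Real.sqrt (1 - x ^ 2) with hs
  set φ := Real.arccos x with hφ
  have hs0 : 0 ≤ s := Real.sqrt_nonneg _
  have hφ0 : 0 ≤ φ := Real.arccos_nonneg x
  have hφ2 : φ ≤ π / 2 := by
    rw [hφ, Real.arccos_eq_pi_div_two_sub_arcsin]
    have := Real.arcsin_nonneg.mpr hx0
    linarith
  have hcos : cos φ = x := Real.cos_arccos (by linarith) hx1
  have hsin : sin φ = s := Real.sin_arccos x
  have hpi : 0 < π := Real.pi_pos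
  have key : ∀ θ ∈ Ioo (-π) π,
      max (cos θ) 0 * max (x * cos θ + s * sin θ) 0 =
      Set.indicator (Icc (φ - π/2) (π/2)) (fun θ => cos θ * (x * cos θ + s * sin θ)) θ := by
    intro θ hθ
    have hcs : x * cos θ + s * sin θ = cos (θ - φ) := by
      rw [Real.cos_sub, hcos, hsin]; ring
    by_cases hm : θ ∈ Icc (φ - π/2) (π/2)
    · rw [Set.indicator_of_mem hm]
      have h1 : 0 ≤ cos θ := cos_nonneg_of_mem_Icc ⟨by linarith [hm.1], hm.2⟩
      have h2 : 0 ≤ x * cos θ + s * sin θ := by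
        rw [hcs]
        exact cos_nonneg_of_mem_Icc ⟨by linarith [hm.1], by linarith [hm.2]⟩
      rw [max_eq_left h1, max_eq_left h2]
    · rw [Set.indicator_of_notMem hm]
      rw [Set.mem_Icc, not_and_or, not_le, not_le] at hm
      rcases hm with hm | hm
      · have : cos (θ - φ) ≤ 0 := by
          rw [← Real.cos_neg, neg_sub]
          refine cos_nonpos_of_pi_div_two_le_of_le (by linarith) ?_
          have := hθ.1
          linarith
        rw [hcs, max_eq_right this, mul_zero]
      · have : cos θ ≤ 0 := by
          refine cos_nonpos_of_pi_div_two_le_of_le (le_of_lt hm) ?_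
          have := hθ.2
          linarith
        rw [max_eq_right this, zero_mul]
  rw [setIntegral_congr_fun measurableSet_Ioo key]
  rw [setIntegral_indicator measurableSet_Icc]
  have hsub : Icc (φ - π/2) (π/2) ⊆ Ioo (-π) π := by
    intro t ht
    constructor
    · have := ht.1; linarith
    · have := ht.2; linarith
  rw [Set.inter_eq_self_of_subset_right hsub]
  have hle : φ - π/2 ≤ π/2 := by linarith
  rw [MeasureTheory.integral_Icc_eq_integral_Ioc, ← intervalIntegral.integral_of_le hle]
  have hftc : ∫ θ in (φ - π/2)..(π/2), cos θ * (x * cos θ + s * sin θ) =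
      (x * (π/2) / 2 + x * Real.sin (2 * (π/2)) / 4 + s * (Real.sin (π/2)) ^ 2 / 2) -
      (x * (φ - π/2) / 2 + x * Real.sin (2 * (φ - π/2)) / 4 + s * (Real.sin (φ - π/2)) ^ 2 / 2) := by
    refine intervalIntegral.integral_eq_sub_of_hasDerivAt
      (f := fun θ => x * θ / 2 + x * Real.sin (2 * θ) / 4 + s * (Real.sin θ) ^ 2 / 2)
      (fun t _ => ?_) ?_
    · have ha : HasDerivAt (fun θ : ℝ => x * θ / 2) (x / 2) t := by
        simpa using ((hasDerivAt_id t).const_mul x).div_const 2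
      have hb : HasDerivAt (fun θ : ℝ => x * Real.sin (2 * θ) / 4)
          (x * (Real.cos (2 * t) * 2) / 4) t := by
        have h2t : HasDerivAt (fun θ : ℝ => 2 * θ) 2 t := by
          simpa using (hasDerivAt_id t).const_mul 2
        exact (h2t.sin.const_mul x).div_const 4
      have hc : HasDerivAt (fun θ : ℝ => s * (Real.sin θ) ^ 2 / 2)
          (s * (2 * Real.sin t ^ 1 * Real.cos t) / 2) t := by
        exact (((Real.hasDerivAt_sin t).pow 2).const_mul s).div_const 2
      have := (ha.add hb).add hc
      convert this using 1
      · rfl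
      rw [Real.cos_two_mul]
      ring
    · exact (Continuous.intervalIntegrable (by continuity) _ _)
  rw [hftc]
  rw [show 2 * (π/2) = π by ring, Real.sin_pi, Real.sin_pi_div_two]
  rw [show 2 * (φ - π/2) = 2*φ - π by ring, Real.sin_sub_pi, Real.sin_two_mul,
    Real.sin_sub_pi_div_two, hsin, hcos]
  rw [hφ, Real.arccos_eq_pi_div_two_sub_arcsin]
  ring

lemma polar_split (x : ℝ) :
    ∫ p, (fun p : ℝ × ℝ => (d1 p.1 * d1 p.2) *
      (max p.1 0 * max (x * p.1 + Real.sqrt (1 - x ^ 2) * p.2) 0)) p =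
      (∫ r in Ioi (0:ℝ), r ^ 3 * rexp (-r ^ 2 / 2) * (2 * π)⁻¹) *
      ∫ θ in Ioo (-π) π, max (cos θ) 0 * max (x * cos θ + Real.sqrt (1 - x ^ 2) * sin θ) 0 := by
  set s := Real.sqrt (1 - x ^ 2) with hs
  set F : ℝ × ℝ → ℝ := fun p => (d1 p.1 * d1 p.2) *
    (max p.1 0 * max (x * p.1 + s * p.2) 0) with hF
  rw [← integral_comp_polarCoord_symm F]
  have hmeas : MeasurableSet polarCoord.target := by
    rw [polarCoord_target]
    exact measurableSet_Ioi.prod measurableSet_Ioo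
  have hcongr : ∀ q ∈ polarCoord.target,
      q.1 • F (polarCoord.symm q) =
      (fun q : ℝ × ℝ => (q.1 ^ 3 * rexp (-q.1 ^ 2 / 2) * (2 * π)⁻¹) *
        (max (cos q.2) 0 * max (x * cos q.2 + s * sin q.2) 0)) q := by
    rintro ⟨r, θ⟩ hq
    rw [polarCoord_target] at hq
    have hr : 0 < r := hq.1
    simp only [hF, polarCoord_symm_apply, smul_eq_mul]
    rw [d1_eq, d1_eq]
    have hexp : rexp (-(r * cos θ) ^ 2 / 2) * rexp (-(r * sin θ) ^ 2 / 2) =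
        rexp (-r ^ 2 / 2) := by
      rw [← Real.exp_add]
      congr 1
      nlinarith [Real.sin_sq_add_cos_sq θ]
    have hsq : (Real.sqrt (2 * π))⁻¹ * (Real.sqrt (2 * π))⁻¹ = (2 * π)⁻¹ := by
      rw [← mul_inv, Real.mul_self_sqrt (by positivity)]
    have hm1 : max (r * cos θ) 0 = r * max (cos θ) 0 := by
      rw [mul_max_of_nonneg _ _ hr.le, mul_zero]
    have hm2 : max (x * (r * cos θ) + s * (r * sin θ)) 0 =
        r * max (x * cos θ + s * sin θ) 0 := by
      rw [mul_max_of_nonneg _ _ hr.le, mul_zero]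
      congr 1
      ring
    calc r * ((Real.sqrt (2*π))⁻¹ * rexp (-(r * cos θ) ^ 2 / 2) *
          ((Real.sqrt (2*π))⁻¹ * rexp (-(r * sin θ) ^ 2 / 2)) *
          (max (r * cos θ) 0 * max (x * (r * cos θ) + s * (r * sin θ)) 0))
        = ((Real.sqrt (2*π))⁻¹ * (Real.sqrt (2*π))⁻¹) *
          (rexp (-(r * cos θ) ^ 2 / 2) * rexp (-(r * sin θ) ^ 2 / 2)) *
          (r * (max (r * cos θ) 0 * max (x * (r * cos θ) + s * (r * sin θ)) 0)) := by ring
      _ = _ := by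
          rw [hexp, hsq, hm1, hm2]
          ring
  rw [setIntegral_congr_fun hmeas hcongr]
  rw [polarCoord_target, Measure.volume_eq_prod, ← Measure.prod_restrict]
  exact integral_prod_mul (μ := volume.restrict (Ioi 0)) (ν := volume.restrict (Ioo (-π) π))
    (fun r => r ^ 3 * rexp (-r ^ 2 / 2) * (2 * π)⁻¹)
    (fun θ => max (cos θ) 0 * max (x * cos θ + s * sin θ) 0)

/-- Closed form of the ReLU correlation function on the edge of chaos: for `x ∈ [0,1]`,
`2 E[max(Z₁,0) max(xZ₁ + √(1−x²)Z₂, 0)] = (1/π) x arcsin(x) + (1/π)√(1−x²) + x/2`. -/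
theorem stmt6 : ∀ x ∈ Icc (0:ℝ) 1,
    2 * ∫ p, max p.1 0 * max (x * p.1 + Real.sqrt (1 - x ^ 2) * p.2) 0 ∂stdG2 =
      (1 / π) * x * Real.arcsin x + (1 / π) * Real.sqrt (1 - x ^ 2) + x / 2 := by
  intro x hx
  obtain ⟨hx0, hx1⟩ := hx
  rw [integral_stdG2 (fun p => max p.1 0 * max (x * p.1 + Real.sqrt (1 - x ^ 2) * p.2) 0)]
  rw [polar_split x]
  rw [integral_mul_const, radial, angular hx0 hx1]
  have hpi : (π : ℝ) ≠ 0 := Real.pi_ne_zero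
  field_simp
  ring
end

section
/- Let f(x) = (1/π) x arcsin(x) + (1/π) √(1−x²) + x/2 for x ∈ [0,1]. Then there exists a constant C > 0 such that for all x ∈ [0,1], |f(x) − x − (2√2/(3π)) (1−x)^{3/2}| ≤ C (1−x)^{5/2}. -/
open Real Set

private lemma hasDerivAt_sqrt_one_sub {x : ℝ} (hx : x < 1) :
    HasDerivAt (fun y : ℝ => Real.sqrt (1 - y)) (-(1 / (2 * Real.sqrt (1 - x)))) x := by
  have h1 : HasDerivAt (fun y : ℝ => 1 - y) (-1) x := by
    simpa using (hasDerivAt_id x).const_sub 1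
  have h2 := (Real.hasDerivAt_sqrt (ne_of_gt (by linarith : (0:ℝ) < 1 - x))).comp x h1
  exact h2.congr_deriv (by ring)

private lemma phi_nonneg : ∀ x ∈ Icc (0:ℝ) 1,
    0 ≤ π/2 - Real.arcsin x - Real.sqrt 2 * Real.sqrt (1 - x) := by
  have hanti : AntitoneOn (fun x : ℝ => π/2 - Real.arcsin x - Real.sqrt 2 * Real.sqrt (1 - x))
      (Icc (0:ℝ) 1) := by
    have hd : ∀ x ∈ Ioo (0:ℝ) 1, HasDerivAt
        (fun x : ℝ => π/2 - Real.arcsin x - Real.sqrt 2 * Real.sqrt (1 - x))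
        (-(1 / Real.sqrt (1 - x^2)) - Real.sqrt 2 * (-(1 / (2 * Real.sqrt (1 - x))))) x := by
      intro x hx
      exact ((Real.hasDerivAt_arcsin (by linarith [hx.1]) (ne_of_lt hx.2)).const_sub (π/2)).sub
        ((hasDerivAt_sqrt_one_sub hx.2).const_mul (Real.sqrt 2))
    apply antitoneOn_of_deriv_nonpos (convex_Icc 0 1)
    · exact ((continuous_const.sub Real.continuous_arcsin).sub
        (continuous_const.mul (Real.continuous_sqrt.comp
          (continuous_const.sub continuous_id)))).continuousOn
    · intro x hx
      rw [interior_Icc] at hx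
      exact (hd x hx).differentiableAt.differentiableWithinAt
    · intro x hx
      rw [interior_Icc] at hx
      rw [(hd x hx).deriv]
      obtain ⟨hx0, hx1⟩ := hx
      have hq : 0 < Real.sqrt (1 - x^2) := Real.sqrt_pos.2 (by nlinarith)
      have hs : 0 < Real.sqrt (1 - x) := Real.sqrt_pos.2 (by linarith)
      have hq2 : (Real.sqrt (1 - x^2))^2 = 1 - x^2 := Real.sq_sqrt (by nlinarith)
      have hs2 : (Real.sqrt (1 - x))^2 = 1 - x := Real.sq_sqrt (by linarith)
      have h2 : (Real.sqrt 2)^2 = 2 := Real.sq_sqrt (by norm_num)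
      have key : Real.sqrt 2 * Real.sqrt (1 - x^2) ≤ 2 * Real.sqrt (1 - x) := by
        nlinarith [sq_nonneg (Real.sqrt 2 * Real.sqrt (1 - x^2) - 2 * Real.sqrt (1 - x)),
          mul_pos hq hs, Real.sqrt_nonneg 2]
      have e1 : -(1 / Real.sqrt (1 - x^2)) - Real.sqrt 2 * (-(1 / (2 * Real.sqrt (1 - x))))
          = -((2 * Real.sqrt (1 - x) - Real.sqrt 2 * Real.sqrt (1 - x^2)) /
              (2 * Real.sqrt (1 - x) * Real.sqrt (1 - x^2))) := by
        field_simp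
        ring
      rw [e1]
      apply neg_nonpos_of_nonneg
      apply div_nonneg (by linarith) (by positivity)
  intro x hx
  have := hanti hx (right_mem_Icc.2 (by norm_num)) hx.2
  simpa [Real.arcsin_one] using this

private lemma psi_nonpos : ∀ x ∈ Icc (0:ℝ) 1,
    π/2 - Real.arcsin x - Real.sqrt 2 * Real.sqrt (1 - x)
      - (1/3) * ((1 - x) * Real.sqrt (1 - x)) ≤ 0 := by
  have hmono : MonotoneOn (fun x : ℝ => π/2 - Real.arcsin x - Real.sqrt 2 * Real.sqrt (1 - x)
      - (1/3) * ((1 - x) * Real.sqrt (1 - x))) (Icc (0:ℝ) 1) := by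
    have hd : ∀ x ∈ Ioo (0:ℝ) 1, HasDerivAt
        (fun x : ℝ => π/2 - Real.arcsin x - Real.sqrt 2 * Real.sqrt (1 - x)
          - (1/3) * ((1 - x) * Real.sqrt (1 - x)))
        ((-(1 / Real.sqrt (1 - x^2)) - Real.sqrt 2 * (-(1 / (2 * Real.sqrt (1 - x)))))
          - (1/3) * ((-1) * Real.sqrt (1 - x) + (1 - x) * (-(1 / (2 * Real.sqrt (1 - x)))))) x := by
      intro x hx
      have h1m : HasDerivAt (fun y : ℝ => 1 - y) (-1) x := by
        simpa using (hasDerivAt_id x).const_sub 1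
      exact (((Real.hasDerivAt_arcsin (by linarith [hx.1]) (ne_of_lt hx.2)).const_sub
        (π/2)).sub ((hasDerivAt_sqrt_one_sub hx.2).const_mul (Real.sqrt 2))).sub
        ((h1m.mul (hasDerivAt_sqrt_one_sub hx.2)).const_mul (1/3))
    apply monotoneOn_of_deriv_nonneg (convex_Icc 0 1)
    · exact (((continuous_const.sub Real.continuous_arcsin).sub
        (continuous_const.mul (Real.continuous_sqrt.comp
          (continuous_const.sub continuous_id)))).sub
        (continuous_const.mul ((continuous_const.sub continuous_id).mul
          (Real.continuous_sqrt.comp (continuous_const.sub continuous_id))))).continuousOn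
    · intro x hx
      rw [interior_Icc] at hx
      exact (hd x hx).differentiableAt.differentiableWithinAt
    · intro x hx
      rw [interior_Icc] at hx
      rw [(hd x hx).deriv]
      obtain ⟨hx0, hx1⟩ := hx
      have hq : 0 < Real.sqrt (1 - x^2) := Real.sqrt_pos.2 (by nlinarith)
      have hs : 0 < Real.sqrt (1 - x) := Real.sqrt_pos.2 (by linarith)
      have hq2 : (Real.sqrt (1 - x^2))^2 = 1 - x^2 := Real.sq_sqrt (by nlinarith)
      have hs2 : (Real.sqrt (1 - x))^2 = 1 - x := Real.sq_sqrt (by linarith)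
      have h2 : (Real.sqrt 2)^2 = 2 := Real.sq_sqrt (by norm_num)
      set s := Real.sqrt (1 - x) with hsdef
      set q := Real.sqrt (1 - x^2) with hqdef
      set r := Real.sqrt 2 with hrdef
      have hq2' : q^2 = s^2 * (2 - s^2) := by rw [hq2, hs2]; ring
      have hid : (q*(r+s^2))^2 - (2*s)^2
          = s^4*(2*r-1) + s^4*(1-s^2)*(2*r-1+s^2) := by
        linear_combination (r+s^2)^2 * hq2' + (s^2*(2-s^2)) * h2
      have hr1 : 1 ≤ r := by nlinarith [Real.sqrt_nonneg 2]
      have ha1 : s^2 ≤ 1 := by rw [hs2]; linarith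
      have hsq : (2*s)^2 ≤ (q*(r+s^2))^2 := by
        nlinarith [sq_nonneg s, sq_nonneg (s^2), mul_nonneg (mul_nonneg (sq_nonneg s) (sq_nonneg s)) (by linarith : (0:ℝ) ≤ 2*r-1),
          mul_nonneg (mul_nonneg (mul_nonneg (sq_nonneg s) (sq_nonneg s)) (by linarith : (0:ℝ) ≤ 1 - s^2)) (by nlinarith : (0:ℝ) ≤ 2*r-1+s^2)]
      have key2 : 2*s ≤ q*(r+s^2) := by
        calc 2*s = Real.sqrt ((2*s)^2) := (Real.sqrt_sq (by positivity)).symm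
          _ ≤ Real.sqrt ((q*(r+s^2))^2) := Real.sqrt_le_sqrt hsq
          _ = q*(r+s^2) := Real.sqrt_sq (by positivity)
      have hx2 : 1 - x = s^2 := hs2.symm
      rw [hx2]
      have e1 : (-(1 / q) - r * (-(1 / (2 * s))))
          - (1/3) * ((-1) * s + s^2 * (-(1 / (2 * s))))
          = (q*(r+s^2) - 2*s) / (2*s*q) := by
        field_simp
        ring
      rw [e1]
      apply div_nonneg (by linarith) (by positivity)
  intro x hx
  have := hmono hx (right_mem_Icc.2 (by norm_num)) hx.2
  simpa [Real.arcsin_one] using this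

/-- Taylor-type expansion near `x = 1` of the ReLU correlation function
`f(x) = (1/π) x arcsin(x) + (1/π)√(1−x²) + x/2`:
`|f(x) − x − (2√2/(3π))(1−x)^{3/2}| ≤ C (1−x)^{5/2}` on `[0,1]`. -/
theorem stmt8 : ∃ C : ℝ, 0 < C ∧ ∀ x ∈ Icc (0:ℝ) 1,
    |((1 / π) * x * Real.arcsin x + (1 / π) * Real.sqrt (1 - x ^ 2) + x / 2) - x -
        (2 * Real.sqrt 2 / (3 * π)) * (1 - x) ^ ((3 : ℝ) / 2)| ≤
      C * (1 - x) ^ ((5 : ℝ) / 2) := by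
  have hπ : (0:ℝ) < π := Real.pi_pos
  -- the function A
  set A : ℝ → ℝ := fun y => ((1 / π) * y * Real.arcsin y + (1 / π) * Real.sqrt (1 - y ^ 2)
      + y / 2) - y - (2 * Real.sqrt 2 / (3 * π)) * ((1 - y) * Real.sqrt (1 - y)) with hA
  set B : ℝ → ℝ := fun y => A y - (2 / (15 * π)) * ((1 - y) ^ 2 * Real.sqrt (1 - y)) with hB
  -- derivative facts
  have hdA : ∀ x ∈ Ioo (0:ℝ) 1, HasDerivAt A
      ((((1 / π * 1) * Real.arcsin x + (1 / π * x) * (1 / Real.sqrt (1 - x ^ 2)))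
        + (1 / π) * (1 / (2 * Real.sqrt (1 - x ^ 2)) * (-(2 * x)))
        + 1 / 2) - 1
        - (2 * Real.sqrt 2 / (3 * π)) * ((-1) * Real.sqrt (1 - x)
            + (1 - x) * (-(1 / (2 * Real.sqrt (1 - x)))))) x := by
    intro x hx
    have h1m : HasDerivAt (fun y : ℝ => 1 - y) (-1) x := by
      simpa using (hasDerivAt_id x).const_sub 1
    have hq0 : (1:ℝ) - x ^ 2 ≠ 0 := by nlinarith [hx.1, hx.2]
    have hinner : HasDerivAt (fun y : ℝ => 1 - y ^ 2) (-(2 * x)) x := by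
      simpa using (hasDerivAt_pow 2 x).const_sub 1
    have hsq : HasDerivAt (fun y : ℝ => Real.sqrt (1 - y ^ 2))
        (1 / (2 * Real.sqrt (1 - x ^ 2)) * (-(2 * x))) x :=
      (Real.hasDerivAt_sqrt hq0).comp x hinner
    exact (((((hasDerivAt_id x).const_mul (1/π)).mul
        (Real.hasDerivAt_arcsin (by linarith [hx.1]) (ne_of_lt hx.2))).add
        (hsq.const_mul (1/π))).add ((hasDerivAt_id x).div_const 2)).sub (hasDerivAt_id x)
      |>.sub ((h1m.mul (hasDerivAt_sqrt_one_sub hx.2)).const_mul (2 * Real.sqrt 2 / (3 * π)))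
  have hdB : ∀ x ∈ Ioo (0:ℝ) 1, HasDerivAt B
      (((((1 / π * 1) * Real.arcsin x + (1 / π * x) * (1 / Real.sqrt (1 - x ^ 2)))
        + (1 / π) * (1 / (2 * Real.sqrt (1 - x ^ 2)) * (-(2 * x)))
        + 1 / 2) - 1
        - (2 * Real.sqrt 2 / (3 * π)) * ((-1) * Real.sqrt (1 - x)
            + (1 - x) * (-(1 / (2 * Real.sqrt (1 - x))))))
        - (2 / (15 * π)) * (((2:ℕ) * (1 - x) ^ 1 * (-1)) * Real.sqrt (1 - x)
            + (1 - x) ^ 2 * (-(1 / (2 * Real.sqrt (1 - x)))))) x := by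
    intro x hx
    have h1m : HasDerivAt (fun y : ℝ => 1 - y) (-1) x := by
      simpa using (hasDerivAt_id x).const_sub 1
    exact (hdA x hx).sub
      (((h1m.pow 2).mul (hasDerivAt_sqrt_one_sub hx.2)).const_mul (2 / (15 * π)))
  have hcont : ContinuousOn A (Icc (0:ℝ) 1) := by
    apply Continuous.continuousOn
    apply Continuous.sub
    apply Continuous.sub
    · exact ((continuous_const.mul continuous_id).mul Real.continuous_arcsin).add
        (continuous_const.mul (Real.continuous_sqrt.comp
          (continuous_const.sub (continuous_pow 2)))) |>.add (continuous_id.div_const 2)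
    · exact continuous_id
    · exact continuous_const.mul ((continuous_const.sub continuous_id).mul
        (Real.continuous_sqrt.comp (continuous_const.sub continuous_id)))
  have hcontB : ContinuousOn B (Icc (0:ℝ) 1) := by
    apply hcont.sub
    apply Continuous.continuousOn
    exact continuous_const.mul (((continuous_const.sub continuous_id).pow 2).mul
      (Real.continuous_sqrt.comp (continuous_const.sub continuous_id)))
  -- A is antitone
  have hanti : AntitoneOn A (Icc (0:ℝ) 1) := by
    apply antitoneOn_of_deriv_nonpos (convex_Icc 0 1) hcont
    · intro x hx
      rw [interior_Icc] at hx
      exact (hdA x hx).differentiableAt.differentiableWithinAt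
    · intro x hx
      rw [interior_Icc] at hx
      rw [(hdA x hx).deriv]
      obtain ⟨hx0, hx1⟩ := hx
      have hq : 0 < Real.sqrt (1 - x^2) := Real.sqrt_pos.2 (by nlinarith)
      have hs : 0 < Real.sqrt (1 - x) := Real.sqrt_pos.2 (by linarith)
      have hs2 : (Real.sqrt (1 - x))^2 = 1 - x := Real.sq_sqrt (by linarith)
      have hφ := phi_nonneg x ⟨hx0.le, hx1.le⟩
      have e1 : (((1 / π * 1) * Real.arcsin x + (1 / π * x) * (1 / Real.sqrt (1 - x ^ 2)))
        + (1 / π) * (1 / (2 * Real.sqrt (1 - x ^ 2)) * (-(2 * x)))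
        + 1 / 2) - 1
        - (2 * Real.sqrt 2 / (3 * π)) * ((-1) * Real.sqrt (1 - x)
            + (1 - x) * (-(1 / (2 * Real.sqrt (1 - x)))))
          = -((π/2 - Real.arcsin x - Real.sqrt 2 * Real.sqrt (1 - x)) / π) := by
        rw [← hs2]
        field_simp
        rw [Real.sqrt_sq hs.le]
        ring
      rw [e1]
      exact neg_nonpos_of_nonneg (div_nonneg hφ hπ.le)
  -- B is monotone
  have hmono : MonotoneOn B (Icc (0:ℝ) 1) := by
    apply monotoneOn_of_deriv_nonneg (convex_Icc 0 1) hcontB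
    · intro x hx
      rw [interior_Icc] at hx
      exact (hdB x hx).differentiableAt.differentiableWithinAt
    · intro x hx
      rw [interior_Icc] at hx
      rw [(hdB x hx).deriv]
      obtain ⟨hx0, hx1⟩ := hx
      have hq : 0 < Real.sqrt (1 - x^2) := Real.sqrt_pos.2 (by nlinarith)
      have hs : 0 < Real.sqrt (1 - x) := Real.sqrt_pos.2 (by linarith)
      have hs2 : (Real.sqrt (1 - x))^2 = 1 - x := Real.sq_sqrt (by linarith)
      have hψ := psi_nonpos x ⟨hx0.le, hx1.le⟩
      have e1 : ((((1 / π * 1) * Real.arcsin x + (1 / π * x) * (1 / Real.sqrt (1 - x ^ 2)))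
        + (1 / π) * (1 / (2 * Real.sqrt (1 - x ^ 2)) * (-(2 * x)))
        + 1 / 2) - 1
        - (2 * Real.sqrt 2 / (3 * π)) * ((-1) * Real.sqrt (1 - x)
            + (1 - x) * (-(1 / (2 * Real.sqrt (1 - x))))))
        - (2 / (15 * π)) * (((2:ℕ) * (1 - x) ^ 1 * (-1)) * Real.sqrt (1 - x)
            + (1 - x) ^ 2 * (-(1 / (2 * Real.sqrt (1 - x)))))
          = -((π/2 - Real.arcsin x - Real.sqrt 2 * Real.sqrt (1 - x)
              - (1/3) * ((1 - x) * Real.sqrt (1 - x))) / π) := by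
        rw [← hs2]
        field_simp
        rw [Real.sqrt_sq hs.le]
        ring
      rw [e1]
      exact neg_nonneg_of_nonpos (div_nonpos_of_nonpos_of_nonneg hψ hπ.le)
  have hA1 : A 1 = 0 := by
    simp only [hA]
    rw [Real.arcsin_one]
    have hπ0 : π ≠ 0 := ne_of_gt hπ
    norm_num
    field_simp
    norm_num
  have hB1 : B 1 = 0 := by
    simp only [hB, hA1]
    norm_num
  refine ⟨2 / (15 * π), by positivity, ?_⟩
  intro x hx
  have hy : (0:ℝ) ≤ 1 - x := by linarith [hx.2]
  have h32 : (1 - x) ^ ((3:ℝ)/2) = (1 - x) * Real.sqrt (1 - x) := by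
    rw [show ((3:ℝ)/2) = 1 + 1/2 by norm_num, Real.rpow_add' hy (by norm_num),
      Real.rpow_one, ← Real.sqrt_eq_rpow]
  have h52 : (1 - x) ^ ((5:ℝ)/2) = (1 - x) ^ 2 * Real.sqrt (1 - x) := by
    rw [show ((5:ℝ)/2) = 2 + 1/2 by norm_num, Real.rpow_add' hy (by norm_num),
      ← Real.sqrt_eq_rpow, show ((2:ℝ)) = ((2:ℕ):ℝ) by norm_num, Real.rpow_natCast]
  have h0A : 0 ≤ A x := by
    have := hanti hx (right_mem_Icc.2 (by norm_num)) hx.2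
    rwa [hA1] at this
  have hBx : A x ≤ 2 / (15 * π) * ((1 - x) ^ 2 * Real.sqrt (1 - x)) := by
    have := hmono hx (right_mem_Icc.2 (by norm_num)) hx.2
    rw [hB1, hB] at this
    simp only at this
    linarith
  rw [h32, h52]
  calc |((1 / π) * x * Real.arcsin x + (1 / π) * Real.sqrt (1 - x ^ 2) + x / 2) - x -
        (2 * Real.sqrt 2 / (3 * π)) * ((1 - x) * Real.sqrt (1 - x))| = |A x| := rfl
    _ = A x := abs_of_nonneg h0A
    _ ≤ 2 / (15 * π) * ((1 - x) ^ 2 * Real.sqrt (1 - x)) := hBx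
end

section
/- Let f(x) = (1/π) x arcsin(x) + (1/π) √(1−x²) + x/2. Then f is strictly increasing on [0,1], f(1) = 1, and f(x) > x for every x ∈ [0,1). -/
open Real Set

lemma key_deriv (x : ℝ) (hx : x ∈ Ioo (0:ℝ) 1) :
    HasDerivAt (fun x : ℝ => (1 / π) * x * Real.arcsin x + (1 / π) * Real.sqrt (1 - x ^ 2) + x / 2)
      (Real.arcsin x / π + 1 / 2) x := by
  obtain ⟨hx0, hx1⟩ := hx
  have hne1 : x ≠ 1 := ne_of_lt hx1
  have hnem1 : x ≠ -1 := by linarith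
  have hu : (0:ℝ) < 1 - x ^ 2 := by nlinarith
  have hs : Real.sqrt (1 - x ^ 2) > 0 := Real.sqrt_pos.mpr hu
  have harc : HasDerivAt Real.arcsin (1 / Real.sqrt (1 - x ^ 2)) x :=
    Real.hasDerivAt_arcsin hnem1 hne1
  have h1 : HasDerivAt (fun x : ℝ => (1 / π) * x * Real.arcsin x)
      ((1 / π) * Real.arcsin x + (1 / π) * x * (1 / Real.sqrt (1 - x ^ 2))) x := by
    have := ((hasDerivAt_id x).const_mul (1 / π)).mul harc
    exact this.congr_deriv (by simp only [id, mul_one])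
  have hinner : HasDerivAt (fun x : ℝ => 1 - x ^ 2) (-(2 * x)) x := by
    simpa using ((hasDerivAt_pow 2 x).const_sub 1)
  have h2 : HasDerivAt (fun x : ℝ => Real.sqrt (1 - x ^ 2))
      (-(2 * x) / (2 * Real.sqrt (1 - x ^ 2))) x :=
    (Real.hasDerivAt_sqrt (ne_of_gt hu)).comp x hinner |>.congr_deriv (by ring)
  have h3 := (h1.add (h2.const_mul (1 / π))).add ((hasDerivAt_id x).div_const 2)
  refine h3.congr_deriv ?_
  have hpi := Real.pi_pos
  field_simp
  ring

/-- The ReLU correlation function `f(x) = (1/π) x arcsin(x) + (1/π)√(1−x²) + x/2` is strictly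
increasing on `[0,1]`, satisfies `f(1) = 1`, and `f(x) > x` for every `x ∈ [0,1)`. -/
theorem stmt9 (f : ℝ → ℝ)
    (hf : ∀ x, f x = (1 / π) * x * Real.arcsin x + (1 / π) * Real.sqrt (1 - x ^ 2) + x / 2) :
    StrictMonoOn f (Icc 0 1) ∧ f 1 = 1 ∧ ∀ x ∈ Ico (0:ℝ) 1, x < f x := by
  have hpi := Real.pi_pos
  have hfe : f = fun x : ℝ =>
      (1 / π) * x * Real.arcsin x + (1 / π) * Real.sqrt (1 - x ^ 2) + x / 2 :=
    funext hf
  have hcont : ContinuousOn f (Icc 0 1) := by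
    rw [hfe]
    apply Continuous.continuousOn
    exact ((continuous_const.mul continuous_id).mul Real.continuous_arcsin).add
      (continuous_const.mul ((continuous_const.sub (continuous_pow 2)).sqrt)) |>.add
      (continuous_id.div_const 2)
  have hint : interior (Icc (0:ℝ) 1) = Ioo 0 1 := interior_Icc
  have hderiv : ∀ x ∈ Ioo (0:ℝ) 1, HasDerivAt f (Real.arcsin x / π + 1 / 2) x := by
    intro x hx; rw [hfe]; exact key_deriv x hx
  have hf1 : f 1 = 1 := by
    rw [hf]
    simp [Real.arcsin_one]
    field_simp
    norm_num
  refine ⟨?_, hf1, ?_⟩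
  · apply strictMonoOn_of_deriv_pos (convex_Icc 0 1) hcont
    intro x hx
    rw [hint] at hx
    rw [(hderiv x hx).deriv]
    have h0 : 0 ≤ Real.arcsin x := Real.arcsin_nonneg.mpr hx.1.le
    positivity
  · intro x hx
    have hg : StrictAntiOn (fun x => f x - x) (Icc 0 1) := by
      apply strictAntiOn_of_deriv_neg (convex_Icc 0 1) (hcont.sub continuousOn_id)
      intro y hy
      rw [hint] at hy
      have hd : HasDerivAt (fun x => f x - x) (Real.arcsin y / π + 1 / 2 - 1) y :=
        (hderiv y hy).sub (hasDerivAt_id y)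
      have : deriv (f - id) y = Real.arcsin y / π + 1 / 2 - 1 := hd.deriv
      rw [this]
      have harc : Real.arcsin y < π / 2 := Real.arcsin_lt_pi_div_two.mpr hy.2
      have h2 : Real.arcsin y / π < 1 / 2 := by
        rw [div_lt_iff₀ hpi]; linarith
      linarith
    have h := hg ⟨hx.1, hx.2.le⟩ (by norm_num : (1:ℝ) ∈ Icc (0:ℝ) 1) hx.2
    simp only [hf1] at h
    linarith
end

section
/- Let f(x) = (1/π) x arcsin(x) + (1/π) √(1−x²) + x/2, let c⁰ ∈ [0,1), and define c^{l+1} = f(c^l) for l ≥ 0. Then the sequence (c^l) is increasing, converges to 1, and satisfies lim_{l → ∞} l² (1 − c^l) = 9π²/2; in particular 1 − c^l ∼ 9π²/(2l²) as l → ∞. -/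
open Real Set Filter Topology

namespace Stmt10


noncomputable def g (t : ℝ) : ℝ := (1 - Real.cos t) - (Real.sin t - t * Real.cos t) / π

lemma m_deriv (s : ℝ) : HasDerivAt (fun s => Real.sin s - s * Real.cos s) (s * Real.sin s) s := by
  have h := (Real.hasDerivAt_sin s).sub ((hasDerivAt_id s).mul (Real.hasDerivAt_cos s))
  exact h.congr_deriv (by simp only [id_eq]; ring)

lemma m_pos {t : ℝ} (ht : 0 < t) (ht2 : t ≤ π / 2) : 0 < Real.sin t - t * Real.cos t := by
  have hπ := Real.pi_pos
  have h : StrictMonoOn (fun s => Real.sin s - s * Real.cos s) (Icc 0 (π / 2)) := by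
    apply strictMonoOn_of_deriv_pos (convex_Icc _ _) (by fun_prop)
    intro s hs
    rw [interior_Icc] at hs
    rw [(m_deriv s).deriv]
    exact mul_pos hs.1 (Real.sin_pos_of_pos_of_lt_pi hs.1 (by linarith [hs.2]))
  have := h ⟨le_refl 0, by linarith⟩ ⟨ht.le, ht2⟩ ht
  simpa using this

lemma k_pos {t : ℝ} (ht : 0 < t) (ht2 : t ≤ π / 2) :
    0 < π * (1 - Real.cos t) - (Real.sin t - t * Real.cos t) := by
  have hπ := Real.pi_pos
  have h : StrictMonoOn (fun s => π * (1 - Real.cos s) - (Real.sin s - s * Real.cos s))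
      (Icc 0 (π / 2)) := by
    apply strictMonoOn_of_deriv_pos (convex_Icc _ _) (by fun_prop)
    intro s hs
    rw [interior_Icc] at hs
    have hd : HasDerivAt (fun s => π * (1 - Real.cos s) - (Real.sin s - s * Real.cos s))
        ((π - s) * Real.sin s) s := by
      have h1 := (((Real.hasDerivAt_cos s).const_sub 1).const_mul π).sub (m_deriv s)
      exact h1.congr_deriv (by ring)
    rw [hd.deriv]
    exact mul_pos (by linarith [hs.2]) (Real.sin_pos_of_pos_of_lt_pi hs.1 (by linarith [hs.2]))
  have := h ⟨le_refl 0, by linarith⟩ ⟨ht.le, ht2⟩ ht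
  simpa using this

lemma g_pos {t : ℝ} (ht : 0 < t) (ht2 : t ≤ π / 2) : 0 < g t := by
  have := k_pos ht ht2
  have hπ := Real.pi_pos
  rw [g, sub_pos, div_lt_iff₀ hπ]
  linarith

lemma f_cos (f : ℝ → ℝ)
    (hf : ∀ x, f x = (1 / π) * x * Real.arcsin x + (1 / π) * Real.sqrt (1 - x ^ 2) + x / 2)
    {t : ℝ} (h0 : 0 ≤ t) (h1 : t ≤ π) : 1 - f (Real.cos t) = g t := by
  have hπ := Real.pi_pos
  have ha : Real.arcsin (Real.cos t) = π / 2 - t := by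
    rw [← Real.sin_pi_div_two_sub, Real.arcsin_sin (by linarith) (by linarith)]
  have hs : Real.sqrt (1 - Real.cos t ^ 2) = Real.sin t := by
    rw [show (1 : ℝ) - Real.cos t ^ 2 = Real.sin t ^ 2 by rw [Real.sin_sq],
      Real.sqrt_sq (Real.sin_nonneg_of_nonneg_of_le_pi h0 h1)]
  rw [hf, ha, hs, g]
  field_simp
  ring



lemma sqrt_diff_eq {t A B : ℝ} (ht : 0 < t) (hA : 0 < A) (hC : 0 < A - t * B / π) :
    (Real.sqrt (t ^ 2 * (A - t * B / π)))⁻¹ - (Real.sqrt (t ^ 2 * A))⁻¹ =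
      (B / π) / (Real.sqrt (A - t * B / π) * Real.sqrt A *
        (Real.sqrt (A - t * B / π) + Real.sqrt A)) := by
  have hπ := Real.pi_pos
  set a := Real.sqrt A with ha
  set ca := Real.sqrt (A - t * B / π) with hca
  have ha0 : 0 < a := Real.sqrt_pos.2 hA
  have hc0 : 0 < ca := Real.sqrt_pos.2 hC
  have ha2 : a * a = A := Real.mul_self_sqrt hA.le
  have hc2 : ca * ca = A - t * B / π := Real.mul_self_sqrt hC.le
  rw [Real.sqrt_mul (sq_nonneg t), Real.sqrt_mul (sq_nonneg t), Real.sqrt_sq ht.le, ← ha, ← hca]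
  have key : π * (a * a) - π * (ca * ca) = t * B := by
    rw [ha2, hc2]; field_simp [Real.pi_ne_zero]; ring
  field_simp
  linear_combination key



lemma tendstoA : Tendsto (fun t : ℝ => (1 - Real.cos t) / t ^ 2) (𝓝[>] (0:ℝ)) (𝓝 (1/2)) := by
  rw [tendsto_iff_norm_sub_tendsto_zero]
  apply squeeze_zero' (g := fun t : ℝ => 5/96 * t ^ 2)
  · exact Eventually.of_forall fun t => norm_nonneg _
  · filter_upwards [Ioo_mem_nhdsGT_of_mem (show (0:ℝ) ∈ Ico 0 1 from ⟨le_refl _, one_pos⟩)]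
      with t ht
    have hb := Real.cos_bound (show |t| ≤ 1 by rw [abs_of_pos ht.1]; exact ht.2.le)
    rw [abs_of_pos ht.1] at hb
    have ht2 : (0:ℝ) < t ^ 2 := pow_pos ht.1 2
    rw [Real.norm_eq_abs,
      show (1 - Real.cos t) / t ^ 2 - 1/2 = -((Real.cos t - (1 - t ^ 2 / 2)) / t ^ 2) by
        field_simp [ht.1.ne']; ring,
      abs_neg, abs_div, abs_of_pos ht2, div_le_iff₀ ht2]
    nlinarith [abs_nonneg (Real.cos t - (1 - t ^ 2 / 2))]
  · have : Tendsto (fun t : ℝ => 5/96 * t ^ 2) (𝓝 0) (𝓝 0) := by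
      exact (continuous_const.mul (continuous_pow 2) : Continuous fun t : ℝ => 5/96 * t ^ 2).tendsto' 0 0 (by simp)
    exact this.mono_left nhdsWithin_le_nhds

lemma tendstoB : Tendsto (fun t : ℝ => (Real.sin t - t * Real.cos t) / t ^ 3)
    (𝓝[>] (0:ℝ)) (𝓝 (1/3)) := by
  rw [tendsto_iff_norm_sub_tendsto_zero]
  apply squeeze_zero' (g := fun t : ℝ => 5/48 * t)
  · exact Eventually.of_forall fun t => norm_nonneg _
  · filter_upwards [Ioo_mem_nhdsGT_of_mem (show (0:ℝ) ∈ Ico 0 1 from ⟨le_refl _, one_pos⟩)]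
      with t ht
    have hbc := Real.cos_bound (show |t| ≤ 1 by rw [abs_of_pos ht.1]; exact ht.2.le)
    have hbs := Real.sin_bound (show |t| ≤ 1 by rw [abs_of_pos ht.1]; exact ht.2.le)
    rw [abs_of_pos ht.1] at hbc hbs
    have ht3 : (0:ℝ) < t ^ 3 := pow_pos ht.1 3
    rw [Real.norm_eq_abs,
      show (Real.sin t - t * Real.cos t) / t ^ 3 - 1/3 =
        ((Real.sin t - (t - t ^ 3 / 6)) - t * (Real.cos t - (1 - t ^ 2 / 2))) / t ^ 3 by
        field_simp [ht.1.ne']; ring,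
      abs_div, abs_of_pos ht3, div_le_iff₀ ht3]
    have h1 : |(Real.sin t - (t - t ^ 3 / 6)) - t * (Real.cos t - (1 - t ^ 2 / 2))| ≤
        |Real.sin t - (t - t ^ 3 / 6)| + t * |Real.cos t - (1 - t ^ 2 / 2)| := by
      rw [show t * |Real.cos t - (1 - t ^ 2 / 2)| = |t * (Real.cos t - (1 - t ^ 2 / 2))| by
        rw [abs_mul, abs_of_pos ht.1]]
      exact abs_sub _ _
    have h2 : t * |Real.cos t - (1 - t ^ 2 / 2)| ≤ t ^ 4 * (5 / 96) := by
      nlinarith [abs_nonneg (Real.cos t - (1 - t ^ 2 / 2)), ht.1.le, ht.2.le]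
    have h3 : t * t ^ 3 = t ^ 4 := by ring
    nlinarith [pow_pos ht.1 4, ht.2, h3]
  · have : Tendsto (fun t : ℝ => 5/48 * t) (𝓝 0) (𝓝 0) := by
      exact (continuous_const.mul continuous_id : Continuous fun t : ℝ => 5/48 * t).tendsto' 0 0 (by simp)
    exact this.mono_left nhdsWithin_le_nhds



lemma sqrt_half : Real.sqrt (1/2 : ℝ) = (Real.sqrt 2)⁻¹ := by
  rw [show (1/2:ℝ) = 2⁻¹ by norm_num, Real.sqrt_inv]

lemma H_tendsto : Tendsto (fun t : ℝ => (Real.sqrt (g t))⁻¹ - (Real.sqrt (1 - Real.cos t))⁻¹)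
    (𝓝[>] (0:ℝ)) (𝓝 (Real.sqrt 2 / (3 * π))) := by
  have hπ := Real.pi_pos
  set A := fun t : ℝ => (1 - Real.cos t) / t ^ 2 with hAdef
  set B := fun t : ℝ => (Real.sin t - t * Real.cos t) / t ^ 3 with hBdef
  have hA : Tendsto A (𝓝[>] (0:ℝ)) (𝓝 (1/2)) := tendstoA
  have hB : Tendsto B (𝓝[>] (0:ℝ)) (𝓝 (1/3)) := tendstoB
  have hid : Tendsto (fun t : ℝ => t) (𝓝[>] (0:ℝ)) (𝓝 0) :=
    tendsto_id.mono_right nhdsWithin_le_nhds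
  have hC : Tendsto (fun t : ℝ => A t - t * B t / π) (𝓝[>] (0:ℝ)) (𝓝 (1/2)) := by
    have h := hA.sub ((hid.mul hB).div_const π)
    have h2 : (1:ℝ)/2 - 0 * (1/3) / π = 1/2 := by ring
    rwa [h2] at h
  set s := Real.sqrt (1/2 : ℝ) with hsdef
  have hs0 : 0 < s := Real.sqrt_pos.2 (by norm_num)
  have hsqC : Tendsto (fun t : ℝ => Real.sqrt (A t - t * B t / π)) (𝓝[>] (0:ℝ)) (𝓝 s) :=
    (Real.continuous_sqrt.tendsto _).comp hC
  have hsqA : Tendsto (fun t : ℝ => Real.sqrt (A t)) (𝓝[>] (0:ℝ)) (𝓝 s) :=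
    (Real.continuous_sqrt.tendsto _).comp hA
  have hden0 : s * s * (s + s) ≠ 0 := by positivity
  have hH2 : Tendsto (fun t : ℝ => (B t / π) / (Real.sqrt (A t - t * B t / π) * Real.sqrt (A t) *
      (Real.sqrt (A t - t * B t / π) + Real.sqrt (A t)))) (𝓝[>] (0:ℝ))
      (𝓝 ((1/3 / π) / (s * s * (s + s)))) :=
    (hB.div_const π).div ((hsqC.mul hsqA).mul (hsqC.add hsqA)) hden0
  have hval : (1/3 / π) / (s * s * (s + s)) = Real.sqrt 2 / (3 * π) := by
    have hsq : Real.sqrt 2 * Real.sqrt 2 = 2 := Real.mul_self_sqrt (by norm_num)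
    have h2 : Real.sqrt 2 ≠ 0 := by positivity
    rw [hsdef, sqrt_half]
    field_simp
    nlinarith [hsq]
  rw [hval] at hH2
  apply hH2.congr'
  filter_upwards [hC.eventually (eventually_gt_nhds (show (0:ℝ) < 1/2 by norm_num)),
    Ioo_mem_nhdsGT_of_mem (show (0:ℝ) ∈ Ico 0 1 from ⟨le_refl _, one_pos⟩)] with t hCt ht
  have ht0 : 0 < t := ht.1
  have ht0' : t ≠ 0 := ht.1.ne'
  have hcos : Real.cos t < 1 := by
    have hb := Real.cos_bound (show |t| ≤ 1 by rw [abs_of_pos ht0]; exact ht.2.le)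
    rw [abs_of_pos ht0] at hb
    have h2 := (abs_le.1 hb).2
    have htle : t ^ 2 ≤ 1 := by nlinarith [ht.2, ht0]
    have h3 : 0 ≤ t ^ 2 * (1 - t ^ 2) := mul_nonneg (sq_nonneg t) (by linarith)
    have ht4 : t ^ 4 ≤ t ^ 2 := by nlinarith [h3]
    have ht2 : 0 < t ^ 2 := pow_pos ht0 2
    nlinarith
  have hA0 : 0 < A t := div_pos (by linarith) (pow_pos ht0 2)
  have h1c : 1 - Real.cos t = t ^ 2 * A t := by rw [hAdef]; field_simp
  have hg : g t = t ^ 2 * (A t - t * B t / π) := by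
    rw [g, hAdef, hBdef]; field_simp
  rw [hg, h1c]
  exact (sqrt_diff_eq ht0 hA0 hCt).symm

end Stmt10

/-- Iterating the ReLU correlation function `f(x) = (1/π) x arcsin(x) + (1/π)√(1−x²) + x/2`
from `c⁰ ∈ [0,1)` gives an increasing sequence converging to `1` with
`l²(1 − c^l) → 9π²/2`, i.e. `1 − c^l ∼ 9π²/(2l²)`. -/
theorem stmt10 (f : ℝ → ℝ)
    (hf : ∀ x, f x = (1 / π) * x * Real.arcsin x + (1 / π) * Real.sqrt (1 - x ^ 2) + x / 2)
    (c : ℕ → ℝ) (hc0 : c 0 ∈ Ico (0:ℝ) 1) (hrec : ∀ l, c (l + 1) = f (c l)) :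
    StrictMono c ∧ Tendsto c atTop (𝓝 1) ∧
      Tendsto (fun l : ℕ => (l : ℝ) ^ 2 * (1 - c l)) atTop (𝓝 (9 * π ^ 2 / 2)) := by
  have hπ := Real.pi_pos
  have hstep : ∀ x, x ∈ Ico (0:ℝ) 1 → x < f x ∧ f x < 1 := by
    intro x hx
    set t := Real.arccos x with htdef
    have ht1 : 0 < t := Real.arccos_pos.2 hx.2
    have ht2 : t ≤ π / 2 := Real.arccos_le_pi_div_two.2 hx.1
    have hcos : Real.cos t = x := Real.cos_arccos (by linarith [hx.1]) hx.2.le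
    have hfg : 1 - f x = Stmt10.g t := by
      rw [← hcos]; exact Stmt10.f_cos f hf ht1.le (by linarith)
    have hgp := Stmt10.g_pos ht1 ht2
    have hm := Stmt10.m_pos ht1 ht2
    constructor
    · have h1 : f x - x = (Real.sin t - t * Real.cos t) / π := by
        rw [Stmt10.g, hcos] at hfg; rw [hcos]; linarith
      have := div_pos hm hπ
      linarith
    · linarith
  have hmem : ∀ l, c l ∈ Ico (0:ℝ) 1 := by
    intro l; induction l with
    | zero => exact hc0
    | succ n ih =>
      obtain ⟨h1, h2⟩ := hstep _ ih
      exact ⟨by rw [hrec]; linarith [ih.1], by rw [hrec]; exact h2⟩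
  have hmono : StrictMono c := strictMono_nat_of_lt_succ fun n => by
    rw [hrec]; exact (hstep _ (hmem n)).1
  have hbdd : BddAbove (range c) := ⟨1, by rintro y ⟨l, rfl⟩; exact (hmem l).2.le⟩
  set L := ⨆ l, c l with hL
  have hlim : Tendsto c atTop (𝓝 L) := tendsto_atTop_ciSup hmono.monotone hbdd
  have hL1 : L ≤ 1 := ciSup_le fun l => (hmem l).2.le
  have hL0 : 0 ≤ L := le_trans hc0.1 (le_ciSup hbdd 0)
  have hfc : Continuous f := by
    have hfe : f = fun x => (1 / π) * x * Real.arcsin x + (1 / π) * Real.sqrt (1 - x ^ 2) + x / 2 :=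
      funext hf
    rw [hfe]
    refine Continuous.add (Continuous.add ?_ ?_) ?_
    · exact (continuous_const.mul continuous_id).mul Real.continuous_arcsin
    · exact continuous_const.mul
        (Real.continuous_sqrt.comp (continuous_const.sub (continuous_pow 2)))
    · exact continuous_id.div_const 2
  have hfix : f L = L := by
    have h1 : Tendsto (fun l => c (l + 1)) atTop (𝓝 L) := hlim.comp (tendsto_add_atTop_nat 1)
    have h2 : Tendsto (fun l => f (c l)) atTop (𝓝 (f L)) := (hfc.tendsto L).comp hlim
    rw [show (fun l => c (l + 1)) = fun l => f (c l) from funext hrec] at h1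
    exact tendsto_nhds_unique h2 h1
  have hLeq : L = 1 := by
    by_contra h
    exact (hstep L ⟨hL0, lt_of_le_of_ne hL1 h⟩).1.ne' hfix
  rw [hLeq] at hlim
  refine ⟨hmono, hlim, ?_⟩
  set u : ℕ → ℝ := fun l => (Real.sqrt (1 - c l))⁻¹ with hu
  set θ : ℕ → ℝ := fun l => Real.arccos (c l) with hθ
  have hθmem : ∀ l, 0 < θ l ∧ θ l ≤ π / 2 := fun l =>
    ⟨Real.arccos_pos.2 (hmem l).2, Real.arccos_le_pi_div_two.2 (hmem l).1⟩
  have hcosθ : ∀ l, Real.cos (θ l) = c l := fun l =>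
    Real.cos_arccos (by linarith [(hmem l).1]) (hmem l).2.le
  have hgθ : ∀ l, 1 - c (l + 1) = Stmt10.g (θ l) := by
    intro l
    rw [hrec, ← hcosθ l]
    exact Stmt10.f_cos f hf (hθmem l).1.le (by linarith [(hθmem l).2])
  have hθlim : Tendsto θ atTop (𝓝[>] 0) := by
    rw [tendsto_nhdsWithin_iff]
    constructor
    · have := (Real.continuous_arccos.tendsto 1).comp hlim
      simpa [hθ, Real.arccos_one, Function.comp_def] using this
    · exact Eventually.of_forall fun l => (hθmem l).1
  have hdiff : Tendsto (fun l => u (l + 1) - u l) atTop (𝓝 (Real.sqrt 2 / (3 * π))) := by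
    have h := Stmt10.H_tendsto.comp hθlim
    apply h.congr
    intro l
    show (Real.sqrt (Stmt10.g (θ l)))⁻¹ - (Real.sqrt (1 - Real.cos (θ l)))⁻¹ = u (l + 1) - u l
    rw [hcosθ, ← hgθ]
  set a := Real.sqrt 2 / (3 * π) with hadef
  have ha0 : 0 < a := div_pos (Real.sqrt_pos.2 two_pos) (by linarith)
  have hces := hdiff.cesaro
  have hces2 : Tendsto (fun n : ℕ => (n : ℝ)⁻¹ * (u n - u 0)) atTop (𝓝 a) := by
    apply hces.congr; intro n; rw [Finset.sum_range_sub u n]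
  have hzero : Tendsto (fun n : ℕ => (n : ℝ)⁻¹ * u 0) atTop (𝓝 0) := by
    have := tendsto_const_div_atTop_nhds_zero_nat (u 0)
    apply this.congr; intro n; rw [div_eq_mul_inv, mul_comm]
  have hw : Tendsto (fun n : ℕ => (n : ℝ)⁻¹ * u n) atTop (𝓝 a) := by
    have h := hces2.add hzero
    rw [add_zero] at h
    apply h.congr; intro n; ring
  have hainv : Tendsto (fun n : ℕ => ((n : ℝ)⁻¹ * u n)⁻¹ ^ 2) atTop (𝓝 (a⁻¹ ^ 2)) :=
    (hw.inv₀ ha0.ne').pow 2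
  have hval : a⁻¹ ^ 2 = 9 * π ^ 2 / 2 := by
    have hsq : Real.sqrt 2 ^ 2 = 2 := Real.sq_sqrt (by norm_num)
    rw [hadef, inv_div, div_pow, hsq]
    ring
  rw [hval] at hainv
  apply hainv.congr'
  filter_upwards [eventually_ge_atTop 1] with n hn
  have hn0 : (n : ℝ) ≠ 0 := Nat.cast_ne_zero.2 (by omega)
  have hε : 0 < 1 - c n := by linarith [(hmem n).2]
  have husq : u n ^ 2 = (1 - c n)⁻¹ := by
    simp only [hu]
    rw [inv_pow, Real.sq_sqrt hε.le]
  rw [mul_inv, inv_inv, mul_pow, inv_pow, husq, inv_inv]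
end

section
/- Let s > 0 and C ≥ 0, and let (γ_l)_{l ≥ 0} be a sequence of strictly positive reals with γ_l → 0 such that |γ_{l+1} − γ_l + s γ_l^{3/2}| ≤ C γ_l^{5/2} for all l. Then lim_{l → ∞} l² γ_l = 4/s². -/
open Real Set Filter Topology

private lemma stmt11_key (a c : ℝ) (ha : 0 < a) (hc : 0 < c) :
    1/c - 1/a = ((a^2 - c^2)/(a^2*a))/((c/a)*(1+c/a)) := by
  have h1 : (0:ℝ) < 1 + c/a := by positivity
  field_simp
  ring


/-- Asymptotic lemma: if `γ_l > 0`, `γ_l → 0` and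
`|γ_{l+1} − γ_l + s γ_l^{3/2}| ≤ C γ_l^{5/2}` for all `l`, then `l² γ_l → 4/s²`. -/
theorem stmt11 (s C : ℝ) (hs : 0 < s) (hC : 0 ≤ C)
    (γ : ℕ → ℝ) (hpos : ∀ l, 0 < γ l) (hlim : Tendsto γ atTop (𝓝 0))
    (hineq : ∀ l, |γ (l + 1) - γ l + s * γ l ^ ((3 : ℝ) / 2)| ≤ C * γ l ^ ((5 : ℝ) / 2)) :
    Tendsto (fun l : ℕ => (l : ℝ) ^ 2 * γ l) atTop (𝓝 (4 / s ^ 2)) := by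
  have h32 : ∀ l, γ l ^ ((3:ℝ)/2) = γ l * Real.sqrt (γ l) := fun l => by
    rw [show (3:ℝ)/2 = 1 + 1/2 by norm_num, Real.rpow_add (hpos l), Real.rpow_one,
      ← Real.sqrt_eq_rpow]
  have h52 : ∀ l, γ l ^ ((5:ℝ)/2) = γ l ^ 2 * Real.sqrt (γ l) := fun l => by
    rw [show (5:ℝ)/2 = 2 + 1/2 by norm_num, Real.rpow_add (hpos l), ← Real.sqrt_eq_rpow]
    norm_num [Real.rpow_natCast]
  set b : ℕ → ℝ := fun l => 1 / Real.sqrt (γ l) with hb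
  have hsq : ∀ l, 0 < Real.sqrt (γ l) := fun l => Real.sqrt_pos.2 (hpos l)
  set A : ℕ → ℝ := fun l => (γ l - γ (l + 1)) / (γ l * Real.sqrt (γ l)) with hA
  have hsqlim : Tendsto (fun l => Real.sqrt (γ l)) atTop (𝓝 0) := by
    simpa [Function.comp_def] using (Real.continuous_sqrt.tendsto 0).comp hlim
  have hAlim : Tendsto A atTop (𝓝 s) := by
    have key : ∀ l, |A l - s| ≤ C * γ l := by
      intro l
      have h := hineq l
      rw [h32 l, h52 l] at h
      have hm : 0 < γ l * Real.sqrt (γ l) := mul_pos (hpos l) (hsq l)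
      have : A l - s = -((γ (l+1) - γ l + s * (γ l * Real.sqrt (γ l))) / (γ l * Real.sqrt (γ l))) := by
        simp only [hA]
        field_simp [(hpos l).ne', (hsq l).ne']
        ring
      rw [this, abs_neg, abs_div, abs_of_pos hm]
      rw [div_le_iff₀ hm]
      calc |γ (l+1) - γ l + s * (γ l * Real.sqrt (γ l))| ≤ C * (γ l ^ 2 * Real.sqrt (γ l)) := h
        _ = C * γ l * (γ l * Real.sqrt (γ l)) := by ring
    have h1 : Tendsto (fun l => C * γ l) atTop (𝓝 0) := by
      simpa using hlim.const_mul C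
    have h2 : Tendsto (fun l => A l - s) atTop (𝓝 0) :=
      squeeze_zero_norm (fun l => key l) h1
    have := h2.add (tendsto_const_nhds (x := s))
    simpa using this
  -- r → 1
  set r : ℕ → ℝ := fun l => γ (l+1) / γ l with hr
  have hreq : ∀ l, r l = 1 - Real.sqrt (γ l) * A l := by
    intro l
    have hne : γ l ≠ 0 := (hpos l).ne'
    have hsne : Real.sqrt (γ l) ≠ 0 := (hsq l).ne'
    simp only [hr, hA]
    field_simp
    ring
  have hrlim : Tendsto r atTop (𝓝 1) := by
    have : Tendsto (fun l => 1 - Real.sqrt (γ l) * A l) atTop (𝓝 (1 - 0 * s)) :=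
      tendsto_const_nhds.sub (hsqlim.mul hAlim)
    simpa [funext hreq] using this
  -- difference identity
  have hdiff : ∀ l, b (l+1) - b l = A l / (Real.sqrt (r l) * (1 + Real.sqrt (r l))) := by
    intro l
    have hrs : Real.sqrt (r l) = Real.sqrt (γ (l+1)) / Real.sqrt (γ l) :=
      Real.sqrt_div (hpos (l+1)).le _
    simp only [hb, hA]
    rw [hrs]
    have := stmt11_key (Real.sqrt (γ l)) (Real.sqrt (γ (l+1))) (hsq l) (hsq (l+1))
    rwa [Real.sq_sqrt (hpos l).le, Real.sq_sqrt (hpos (l+1)).le] at this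
  have hdlim : Tendsto (fun l => b (l+1) - b l) atTop (𝓝 (s/2)) := by
    have h1 : Tendsto (fun l => Real.sqrt (r l)) atTop (𝓝 1) := by
      simpa [Function.comp_def] using (Real.continuous_sqrt.tendsto 1).comp hrlim
    have hden := h1.mul ((tendsto_const_nhds (x := (1:ℝ))).add h1)
    norm_num at hden
    have := hAlim.div hden (by norm_num)
    simpa [funext hdiff, Pi.div_def] using this
  -- Cesàro
  have hces : Tendsto (fun n : ℕ => (n:ℝ)⁻¹ * ∑ i ∈ Finset.range n, (b (i+1) - b i)) atTop (𝓝 (s/2)) :=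
    hdlim.cesaro
  have hbn : Tendsto (fun n : ℕ => b n / n) atTop (𝓝 (s/2)) := by
    have hinv : Tendsto (fun n : ℕ => (n:ℝ)⁻¹) atTop (𝓝 0) :=
      tendsto_inv_atTop_zero.comp tendsto_natCast_atTop_atTop
    have h0 : Tendsto (fun n : ℕ => b 0 * (n:ℝ)⁻¹) atTop (𝓝 0) := by
      simpa using hinv.const_mul (b 0)
    have h := h0.add hces
    rw [zero_add] at h
    apply h.congr
    intro n
    rw [Finset.sum_range_sub]
    ring
  have hnb : Tendsto (fun n : ℕ => (n:ℝ) / b n) atTop (𝓝 (2/s)) := by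
    have h := hbn.inv₀ (by positivity)
    have h2s : (s/2)⁻¹ = 2/s := by field_simp
    rw [h2s] at h
    apply h.congr
    intro n
    rw [inv_div]
  have hfin : Tendsto (fun n : ℕ => ((n:ℝ) / b n)^2) atTop (𝓝 ((2/s)^2)) := hnb.pow 2
  have h4 : (2/s)^2 = 4 / s^2 := by field_simp; ring
  rw [h4] at hfin
  apply hfin.congr
  intro n
  have hb2 : b n ^ 2 = 1 / γ n := by
    simp only [hb]
    rw [div_pow, one_pow, Real.sq_sqrt (hpos n).le]
  rw [div_pow, hb2]
  field_simp
end

section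
/- Let φ(t) = t/(1 + e^{−t}) be the Swish activation and g(t) = t φ'(t) φ(t). Then g(t) + g(−t) > 0 for every t ≠ 0; equivalently, for every t > 0, 1 + e^{−t} + t e^{−t} > e^{−3t}(−1 − e^{t} + t e^{t}). Consequently E[Z φ'(√x Z) φ(√x Z)] > 0 for every x > 0, so for any σ_b ≥ 0 and σ_w > 0 the variance function F(x) = σ_b² + σ_w² E[φ(√x Z)²] is strictly increasing on (0, ∞). -/
open MeasureTheory ProbabilityTheory Real Filter Topology Set
open scoped NNReal ENNReal

/-- The Swish activation `φ(t) = t·sigmoid(t) = t/(1 + e^{−t})`. -/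
noncomputable def swish (t : ℝ) : ℝ := t / (1 + Real.exp (-t))

lemma sig_pos (t : ℝ) : 0 < 1 + Real.exp (-t) := by positivity

lemma swish_hasDerivAt (t : ℝ) :
    HasDerivAt swish
      ((1 + Real.exp (-t) + t * Real.exp (-t)) / (1 + Real.exp (-t)) ^ 2) t := by
  have h1 : HasDerivAt (fun u : ℝ => 1 + Real.exp (-u)) (-Real.exp (-t)) t := by
    have := ((Real.hasDerivAt_exp (-t)).comp t (hasDerivAt_neg t)).const_add 1
    simpa using this
  have h2 := (hasDerivAt_id t).fun_div h1 (ne_of_gt (sig_pos t))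
  apply h2.congr_deriv
  have h3 := (sig_pos t).ne'
  simp only [id]; ring

lemma deriv_swish (t : ℝ) :
    deriv swish t = (1 + Real.exp (-t) + t * Real.exp (-t)) / (1 + Real.exp (-t)) ^ 2 :=
  (swish_hasDerivAt t).deriv

lemma key_s18 (t : ℝ) :
    0 < 1 + Real.exp (-t) + Real.exp (-t) ^ 2 + Real.exp (-t) ^ 3
      + t * Real.exp (-t) * (1 - Real.exp (-t)) := by
  have hs := Real.exp_pos (-t)
  have h : 0 ≤ t * (1 - Real.exp (-t)) := by
    rcases le_or_gt 0 t with h | h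
    · have h1 : Real.exp (-t) ≤ 1 := Real.exp_le_one_iff.2 (by linarith)
      nlinarith
    · have h1 : 1 ≤ Real.exp (-t) := Real.one_le_exp (by linarith)
      nlinarith
  nlinarith

lemma part1 (t : ℝ) (ht : t ≠ 0) :
    0 < t * deriv swish t * swish t + (-t) * deriv swish (-t) * swish (-t) := by
  rw [deriv_swish, deriv_swish]
  unfold swish
  rw [neg_neg]
  have hE : Real.exp t = (Real.exp (-t))⁻¹ := by rw [Real.exp_neg, inv_inv]
  set s := Real.exp (-t) with hs
  have hs0 : 0 < s := Real.exp_pos _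
  have h1s : (0:ℝ) < 1 + s := by linarith
  have h1si : (0:ℝ) < 1 + s⁻¹ := by positivity
  have ht2 : 0 < t ^ 2 := by positivity
  rw [hE]
  have hkey := key_s18 t
  rw [← hs] at hkey
  have heq : t * ((1 + s + t * s) / (1 + s) ^ 2) * (t / (1 + s))
      + -t * ((1 + s⁻¹ + -t * s⁻¹) / (1 + s⁻¹) ^ 2) * (-t / (1 + s⁻¹))
      = t ^ 2 * (1 + s + s ^ 2 + s ^ 3 + t * s * (1 - s)) / (1 + s) ^ 3 := by
    field_simp
    ring
  rw [heq]
  exact div_pos (mul_pos ht2 hkey) (by positivity)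

lemma part2 (t : ℝ) (ht : 0 < t) :
    Real.exp (-(3 * t)) * (-1 - Real.exp t + t * Real.exp t) <
      1 + Real.exp (-t) + t * Real.exp (-t) := by
  have h3 : Real.exp (-(3 * t)) = Real.exp (-t) ^ 3 := by
    rw [show -(3 * t) = (3:ℕ) * (-t) by push_cast; ring, Real.exp_nat_mul]
  rw [h3]
  have hE : Real.exp t * Real.exp (-t) = 1 := by rw [← Real.exp_add]; simp
  set a := Real.exp (-t) with ha
  have ha0 : 0 < a := Real.exp_pos _
  have ha1 : a < 1 := by rw [ha]; exact Real.exp_lt_one_iff.2 (by linarith)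
  have h4 : a ^ 3 * Real.exp t = a ^ 2 := by
    rw [show a ^ 3 = a ^ 2 * a by ring, mul_assoc, mul_comm a (Real.exp t), hE, mul_one]
  nlinarith [h4, mul_pos ht (mul_pos ha0 (sub_pos.2 ha1)), mul_pos (mul_pos ha0 ha0) ha0]
instance : IsProbabilityMeasure stdG := by unfold stdG; infer_instance

lemma integrable_sq_stdG : Integrable (fun z : ℝ => z ^ 2) stdG := by
  rw [stdG, gaussianReal_of_var_ne_zero 0 one_ne_zero]
  rw [integrable_withDensity_iff (measurable_gaussianPDF 0 1)
    (Eventually.of_forall fun x => by rw [gaussianPDF_def]; exact ENNReal.ofReal_lt_top)]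
  have h := (integrable_rpow_mul_exp_neg_mul_sq (by norm_num : (0:ℝ) < 1/2)
    (by norm_num : (-1:ℝ) < 2)).const_mul ((Real.sqrt (2 * π))⁻¹)
  refine h.congr (Eventually.of_forall fun x => ?_)
  rw [gaussianPDF_def]
  simp only [ENNReal.toReal_ofReal (gaussianPDFReal_nonneg 0 1 x)]
  rw [gaussianPDFReal_def]
  rw [show (x : ℝ) ^ (2:ℝ) = x ^ 2 by
    rw [show (2:ℝ) = ((2:ℕ):ℝ) by norm_num, Real.rpow_natCast]]
  rw [show -(1/2 : ℝ) * x ^ 2 = -(x - 0) ^ 2 / (2 * ((1:ℝ≥0):ℝ)) by push_cast; ring]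
  push_cast
  ring

lemma stdG_map_neg : stdG.map (fun z : ℝ => -z) = stdG := by
  have h := gaussianReal_map_const_mul (μ := 0) (v := 1) (-1)
  have h2 : (NNReal.mk ((-1:ℝ) ^ 2) (sq_nonneg _)) * 1 = 1 := by
    ext; norm_num
  rw [h2, mul_zero] at h
  simp only [neg_one_mul] at h
  rw [stdG]
  exact h

lemma integral_neg_stdG (g : ℝ → ℝ) (hg : Continuous g) :
    ∫ z, g (-z) ∂stdG = ∫ z, g z ∂stdG := by
  conv_rhs => rw [← stdG_map_neg]
  rw [integral_map measurable_neg.aemeasurable hg.aestronglyMeasurable]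

lemma integrable_of_bound {g : ℝ → ℝ} (hg : Continuous g) (C : ℝ)
    (hb : ∀ z, |g z| ≤ C * z ^ 2) : Integrable g stdG := by
  refine (integrable_sq_stdG.const_mul C).mono' hg.aestronglyMeasurable ?_
  exact Eventually.of_forall fun z => by simpa [Real.norm_eq_abs] using hb z

lemma integral_pos_stdG {g : ℝ → ℝ} (hint : Integrable g stdG)
    (h0 : 0 ≤ g 0) (hpos : ∀ z : ℝ, z ≠ 0 → 0 < g z) :
    0 < ∫ z, g z ∂stdG := by
  have hnn : 0 ≤ᵐ[stdG] g := Eventually.of_forall fun z => by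
    by_cases hz : z = 0
    · simpa [hz] using h0
    · exact (hpos z hz).le
  rw [integral_pos_iff_support_of_nonneg_ae hnn hint]
  have hsub : ({0}ᶜ : Set ℝ) ⊆ Function.support g := fun z hz => (hpos z hz).ne'
  have h0' : stdG {0} = 0 :=
    gaussianReal_absolutelyContinuous 0 one_ne_zero (measure_singleton 0)
  calc (0:ℝ≥0∞) < 1 := by norm_num
  _ = stdG ({0}ᶜ : Set ℝ) := by
      rw [measure_compl (measurableSet_singleton 0) (measure_ne_top _ _), h0',
        measure_univ, tsub_zero]
  _ ≤ stdG (Function.support g) := measure_mono hsub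


lemma continuous_swish : Continuous swish :=
  Continuous.div continuous_id (by continuity) fun t => (sig_pos t).ne'

lemma continuous_deriv_swish : Continuous (deriv swish) := by
  have h : deriv swish
      = fun t => (1 + Real.exp (-t) + t * Real.exp (-t)) / (1 + Real.exp (-t)) ^ 2 :=
    funext deriv_swish
  rw [h]
  exact Continuous.div (by continuity) (by continuity) fun t => by positivity

lemma abs_swish_le (t : ℝ) : |swish t| ≤ |t| := by
  rw [swish, abs_div, abs_of_pos (sig_pos t), div_le_iff₀ (sig_pos t)]
  nlinarith [abs_nonneg t, Real.exp_pos (-t)]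

lemma abs_deriv_swish_le (t : ℝ) : |deriv swish t| ≤ 2 := by
  rw [deriv_swish]
  set s := Real.exp (-t) with hs
  have hs0 : 0 < s := Real.exp_pos _
  have hts : |t| * s ≤ (1 + s) ^ 2 := by
    rcases le_or_gt 0 t with h | h
    · rw [abs_of_nonneg h]
      have hE : Real.exp t * s = 1 := by rw [hs, ← Real.exp_add]; simp
      have h1 : t + 1 ≤ Real.exp t := Real.add_one_le_exp t
      nlinarith
    · rw [abs_of_neg h]
      have h1 : -t + 1 ≤ s := by rw [hs]; exact Real.add_one_le_exp (-t)
      nlinarith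
  rw [abs_div, abs_of_nonneg (by positivity : (0:ℝ) ≤ (1 + s) ^ 2),
    div_le_iff₀ (by positivity)]
  have h2 : |1 + s + t * s| ≤ 1 + s + |t| * s := by
    calc |1 + s + t * s| ≤ |1 + s| + |t * s| := abs_add_le _ _
    _ = 1 + s + |t| * s := by
        rw [abs_of_pos (by positivity : (0:ℝ) < 1 + s), abs_mul, abs_of_pos hs0]
  nlinarith

/-- symmetrized square of swish -/
noncomputable def Gfun (a : ℝ) : ℝ := swish a ^ 2 + swish (-a) ^ 2

lemma Gfun_even (a : ℝ) : Gfun (-a) = Gfun a := by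
  rw [Gfun, Gfun, neg_neg, add_comm]

lemma continuous_Gfun : Continuous Gfun :=
  (continuous_swish.pow 2).add ((continuous_swish.comp continuous_neg).pow 2)

lemma Gfun_hasDerivAt (a : ℝ) :
    HasDerivAt Gfun
      (2 * swish a * deriv swish a - 2 * swish (-a) * deriv swish (-a)) a := by
  have hd : HasDerivAt swish (deriv swish a) a := by
    rw [deriv_swish]; exact swish_hasDerivAt a
  have hd' : HasDerivAt swish (deriv swish (-a)) (-a) := by
    rw [deriv_swish]; exact swish_hasDerivAt (-a)
  have h1 : HasDerivAt (fun u : ℝ => swish u ^ 2) (2 * swish a * deriv swish a) a := by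
    have := hd.fun_pow 2
    simpa [mul_comm] using this
  have hc : HasDerivAt (fun u : ℝ => swish (-u)) (deriv swish (-a) * (-1)) a :=
    HasDerivAt.comp a hd' (hasDerivAt_neg a)
  have h2 : HasDerivAt (fun u : ℝ => swish (-u) ^ 2)
      (2 * swish (-a) * (deriv swish (-a) * (-1))) a := by
    have := hc.fun_pow 2
    simpa [mul_comm] using this
  have := h1.fun_add h2
  apply this.congr_deriv
  ring

lemma Gfun_strictMonoOn : StrictMonoOn Gfun (Ici 0) := by
  apply strictMonoOn_of_deriv_pos (convex_Ici 0) continuous_Gfun.continuousOn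
  intro a ha
  rw [interior_Ici] at ha
  rw [(Gfun_hasDerivAt a).deriv]
  have ha' : (0:ℝ) < a := ha
  have h := part1 a (ne_of_gt ha')
  nlinarith [h, ha']

lemma integrable_swish_sq (c : ℝ) :
    Integrable (fun z : ℝ => swish (c * z) ^ 2) stdG := by
  apply integrable_of_bound
    ((continuous_swish.comp (continuous_const.mul continuous_id)).pow 2) (c ^ 2)
  intro z
  have h := abs_swish_le (c * z)
  rw [abs_of_nonneg (sq_nonneg _)]
  calc swish (c * z) ^ 2 = |swish (c * z)| ^ 2 := (sq_abs _).symm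
  _ ≤ |c * z| ^ 2 := by nlinarith [abs_nonneg (swish (c * z))]
  _ = c ^ 2 * z ^ 2 := by rw [abs_mul]; rw [mul_pow, sq_abs, sq_abs]

lemma part3 {c : ℝ} (hc : 0 < c) :
    0 < ∫ z, z * deriv swish (c * z) * swish (c * z) ∂stdG := by
  set h : ℝ → ℝ := fun z => z * deriv swish (c * z) * swish (c * z) with hh
  have hcont : Continuous h := by
    apply Continuous.mul
    apply Continuous.mul continuous_id
    · exact continuous_deriv_swish.comp (continuous_const.mul continuous_id)
    · exact continuous_swish.comp (continuous_const.mul continuous_id)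
  have hbnd : ∀ z, |h z| ≤ (2 * c) * z ^ 2 := by
    intro z
    rw [hh]
    have h1 := abs_deriv_swish_le (c * z)
    have h2 := abs_swish_le (c * z)
    have h3 : |c * z| = c * |z| := by rw [abs_mul, abs_of_pos hc]
    rw [abs_mul, abs_mul]
    calc |z| * |deriv swish (c * z)| * |swish (c * z)|
        ≤ |z| * 2 * (c * |z|) := by
          apply mul_le_mul _ (h3 ▸ h2) (abs_nonneg _) (by positivity)
          exact mul_le_mul_of_nonneg_left h1 (abs_nonneg z)
    _ = (2 * c) * z ^ 2 := by rw [← sq_abs z]; ring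
  have hint : Integrable h stdG := integrable_of_bound hcont (2 * c) hbnd
  have hint2 : Integrable (fun z => h (-z)) stdG := by
    apply integrable_of_bound (hcont.comp continuous_neg) (2 * c)
    intro z; simpa using hbnd (-z)
  have hsym : ∫ z, h (-z) ∂stdG = ∫ z, h z ∂stdG := integral_neg_stdG h hcont
  have hposk : 0 < ∫ z, (h z + h (-z)) ∂stdG := by
    apply integral_pos_stdG (g := fun z => h z + h (-z)) (hint.add hint2)
    · simp [hh]
    · intro z hz
      have hp := part1 (c * z) (by positivity)
      simp only [hh, mul_neg]
      nlinarith [hp, hc]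
  rw [integral_add hint hint2, hsym] at hposk
  linarith

lemma part4core {c c' : ℝ} (hc : 0 < c) (hcc : c < c') :
    (∫ z, swish (c * z) ^ 2 ∂stdG) < ∫ z, swish (c' * z) ^ 2 ∂stdG := by
  have hc' : 0 < c' := hc.trans hcc
  -- symmetrization identity
  have hsym : ∀ b : ℝ, ∫ z, swish (-(b * z)) ^ 2 ∂stdG = ∫ z, swish (b * z) ^ 2 ∂stdG := by
    intro b
    have := integral_neg_stdG (fun z => swish (b * z) ^ 2)
      (by exact (continuous_swish.comp (continuous_const.mul continuous_id)).pow 2)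
    simpa [mul_neg] using this
  have hGint : ∀ b : ℝ, Integrable (fun z => Gfun (b * z)) stdG := by
    intro b
    have h2 : Integrable (fun z : ℝ => swish (-(b * z)) ^ 2) stdG := by
      have := integrable_swish_sq (-b)
      simpa [neg_mul] using this
    simpa [Gfun] using (integrable_swish_sq b).fun_add h2
  have hGeq : ∀ b : ℝ, ∫ z, Gfun (b * z) ∂stdG = 2 * ∫ z, swish (b * z) ^ 2 ∂stdG := by
    intro b
    have h2 : Integrable (fun z : ℝ => swish (-(b * z)) ^ 2) stdG := by
      have := integrable_swish_sq (-b)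
      simpa [neg_mul] using this
    calc ∫ z, Gfun (b * z) ∂stdG
        = ∫ z, (swish (b * z) ^ 2 + swish (-(b * z)) ^ 2) ∂stdG := by rfl
    _ = (∫ z, swish (b * z) ^ 2 ∂stdG) + ∫ z, swish (-(b * z)) ^ 2 ∂stdG :=
        integral_add (integrable_swish_sq b) h2
    _ = 2 * ∫ z, swish (b * z) ^ 2 ∂stdG := by rw [hsym b]; ring
  have hdiffpos : 0 < ∫ z, (Gfun (c' * z) - Gfun (c * z)) ∂stdG := by
    apply integral_pos_stdG (g := fun z => Gfun (c' * z) - Gfun (c * z))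
      ((hGint c').sub (hGint c))
    · simp
    · intro z hz
      have hGabs : ∀ b : ℝ, 0 < b → Gfun (b * z) = Gfun (b * |z|) := by
        intro b hb
        rcases abs_cases z with ⟨h1, _⟩ | ⟨h1, _⟩
        · rw [h1]
        · rw [h1, mul_neg, Gfun_even]
      have hzpos : 0 < |z| := abs_pos.2 hz
      have hlt : Gfun (c * |z|) < Gfun (c' * |z|) :=
        Gfun_strictMonoOn (mem_Ici.2 (by positivity)) (mem_Ici.2 (by positivity))
          (mul_lt_mul_of_pos_right hcc hzpos)
      rw [hGabs c hc, hGabs c' hc']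
      linarith
  rw [integral_sub (hGint c') (hGint c), hGeq, hGeq] at hdiffpos
  linarith

/-- For Swish with `g(t) = t φ'(t) φ(t)`: `g(t) + g(−t) > 0` for `t ≠ 0`; equivalently for
`t > 0`, `1 + e^{−t} + te^{−t} > e^{−3t}(−1 − e^t + te^t)`. Consequently
`E[Z φ'(√x Z) φ(√x Z)] > 0` for `x > 0`, so the variance function
`F(x) = σ_b² + σ_w² E[φ(√x Z)²]` is strictly increasing on `(0, ∞)`. -/
theorem stmt18 :
    (∀ t : ℝ, t ≠ 0 →
      0 < t * deriv swish t * swish t + (-t) * deriv swish (-t) * swish (-t)) ∧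
    (∀ t : ℝ, 0 < t →
      Real.exp (-(3 * t)) * (-1 - Real.exp t + t * Real.exp t) <
        1 + Real.exp (-t) + t * Real.exp (-t)) ∧
    (∀ x : ℝ, 0 < x →
      0 < ∫ z, z * deriv swish (Real.sqrt x * z) * swish (Real.sqrt x * z) ∂stdG) ∧
    (∀ σb σw : ℝ, 0 ≤ σb → 0 < σw →
      StrictMonoOn (fun x => σb ^ 2 + σw ^ 2 * ∫ z, (swish (Real.sqrt x * z)) ^ 2 ∂stdG)
        (Ioi 0)) := by
  refine ⟨part1, part2, fun x hx => part3 (Real.sqrt_pos.2 hx), ?_⟩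
  intro σb σw hσb hσw x hx y hy hxy
  have h := part4core (Real.sqrt_pos.2 hx) (Real.sqrt_lt_sqrt (le_of_lt hx) hxy)
  have h2 := mul_lt_mul_of_pos_left h (pow_pos hσw 2)
  simpa using by linarith
end
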